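/- arXiv:1611.03889 — 2 statements merged into one kernel-verified Lean document; each statement's English description precedes it below -/
import Mathlib

section
/- Let G be a simple 3-vertex-connected graph with at least six vertices, and let (e, S) be a separating pair of G, where e = xy and A, B are the two components of G − e − S with x ∈ A and y ∈ B. Then every edge of G joining a vertex of S to a vertex of {x, y} is removable. -/
open SimpleGraph

universe u

variable {V : Type u}

/-- Two walks with the same endpoints are internally vertex-disjoint. -/
def IntDisjoint {G : SimpleGraph V} {x y : V} (p q : G.Walk x y) : Prop :=
  ∀ v ∈ p.support, v ∈ q.support → v = x ∨ v = y

/-- There are `k` pairwise internally vertex-disjoint `x`-`y` paths in `G`. -/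
def ConnK (G : SimpleGraph V) (k : ℕ) (x y : V) : Prop :=
  ∃ P : Fin k → G.Walk x y, (∀ i, (P i).IsPath) ∧
    ∀ i j, i ≠ j → IntDisjoint (P i) (P j)

/-- `G` is `(Q,r)`-vertex-connected. -/
def QRConn (G : SimpleGraph V) (Q : Set V) (r : V → ℕ) : Prop :=
  ∀ x ∈ Q, ∀ y ∈ Q, x ≠ y → ConnK G (min (r x) (r y)) x y

/-- Delete a vertex (isolate it). -/
def delV (G : SimpleGraph V) (v : V) : SimpleGraph V where
  Adj a b := G.Adj a b ∧ a ≠ v ∧ b ≠ v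
  symm := by constructor; intro a b h; exact ⟨h.1.symm, h.2.2, h.2.1⟩
  loopless := by constructor; intro a h; exact G.loopless.irrefl a h.1

/-- `G` is minimally `(Q,r)`-vertex-connected: it is `(Q,r)`-vertex-connected but
deleting any edge or any vertex destroys this property. -/
def MinQR (G : SimpleGraph V) (Q : Set V) (r : V → ℕ) : Prop :=
  QRConn G Q r ∧ (∀ e ∈ G.edgeSet, ¬ QRConn (G.deleteEdges {e}) Q r) ∧
    ∀ v : V, ¬ QRConn (delV G v) Q r

/-- Biconnected: at least 3 vertices, connected, and no cut vertex. -/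
def Biconnected (G : SimpleGraph V) : Prop :=
  3 ≤ Nat.card V ∧ G.Connected ∧ ∀ v : V, (SimpleGraph.induce {w | w ≠ v} G).Connected

/-- Three-vertex-connected: more than 3 vertices and removing any at most 2
vertices leaves the graph connected. -/
def ThreeConnected (G : SimpleGraph V) : Prop :=
  4 ≤ Nat.card V ∧ ∀ s : Set V, s.ncard ≤ 2 → (SimpleGraph.induce sᶜ G).Connected

/-- Degree of a vertex. -/
noncomputable def vdeg (G : SimpleGraph V) (v : V) : ℕ := (G.neighborSet v).ncard

/-- The contracted version of `G`: suppress all degree-2 vertices.  Two vertices of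
degree `≠ 2` are adjacent iff they are joined by a path all of whose internal
vertices have degree 2. -/
def suppress (G : SimpleGraph V) : SimpleGraph {v : V // vdeg G v ≠ 2} where
  Adj u v := u ≠ v ∧ ∃ p : G.Walk u.1 v.1, p.IsPath ∧
      ∀ w ∈ p.support, w ≠ u.1 → w ≠ v.1 → vdeg G w = 2
  symm := by
    constructor
    rintro u v ⟨hne, p, hp, hint⟩
    refine ⟨hne.symm, p.reverse, hp.reverse, ?_⟩
    intro w hw h1 h2
    rw [SimpleGraph.Walk.support_reverse, List.mem_reverse] at hw
    exact hint w hw h2 h1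
  loopless := by constructor; intro u h; exact h.1 rfl

/-- The removal operation of Holton–Jackson–Saito–Wormald: delete the edge `uv`,
suppress any resulting degree-2 vertices and simplify parallel edges; the edge is
removable when the result is three-connected. -/
def Removable (G : SimpleGraph V) (u v : V) : Prop :=
  ThreeConnected (suppress (G.deleteEdges {s(u, v)}))

/-- Reachability avoiding a vertex set `T`. -/
def Rch (G' : SimpleGraph V) (T : Set V) (a b : V) : Prop :=
  ∃ p : G'.Walk a b, ∀ w ∈ p.support, w ∉ T

lemma Rch.left_nmem {G' : SimpleGraph V} {T : Set V} {a b : V} (h : Rch G' T a b) : a ∉ T := by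
  obtain ⟨p, hp⟩ := h; exact hp a p.start_mem_support

lemma Rch.right_nmem {G' : SimpleGraph V} {T : Set V} {a b : V} (h : Rch G' T a b) : b ∉ T := by
  obtain ⟨p, hp⟩ := h; exact hp b p.end_mem_support

lemma rch_refl {G' : SimpleGraph V} {T : Set V} {a : V} (ha : a ∉ T) : Rch G' T a a :=
  ⟨.nil, by simpa using ha⟩

lemma Rch.symm {G' : SimpleGraph V} {T : Set V} {a b : V} (h : Rch G' T a b) : Rch G' T b a := by
  obtain ⟨p, hp⟩ := h
  exact ⟨p.reverse, by intro w hw; rw [Walk.support_reverse, List.mem_reverse] at hw; exact hp w hw⟩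

lemma Rch.trans {G' : SimpleGraph V} {T : Set V} {a b c : V} (h : Rch G' T a b)
    (h' : Rch G' T b c) : Rch G' T a c := by
  obtain ⟨p, hp⟩ := h; obtain ⟨q, hq⟩ := h'
  refine ⟨p.append q, ?_⟩
  intro w hw
  rw [Walk.support_append, List.mem_append] at hw
  rcases hw with hw | hw
  · exact hp w hw
  · exact hq w (List.mem_of_mem_tail hw)

lemma rch_adj {G' : SimpleGraph V} {T : Set V} {a b : V} (h : G'.Adj a b) (ha : a ∉ T)
    (hb : b ∉ T) : Rch G' T a b :=
  ⟨h.toWalk, by intro w hw; simp [Walk.support_cons] at hw; rcases hw with rfl | rfl <;> assumption⟩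

/-- A walk in an induced subgraph yields `Rch` avoiding any `T` disjoint from the inducing set. -/
lemma induce_rch {G' : SimpleGraph V} {s T : Set V} (hd : ∀ v ∈ s, v ∉ T)
    (hconn : (SimpleGraph.induce s G').Connected) {a b : V} (ha : a ∈ s) (hb : b ∈ s) :
    Rch G' T a b := by
  obtain ⟨q⟩ := hconn.preconnected ⟨a, ha⟩ ⟨b, hb⟩
  have : ∀ (u v : s) (q : (SimpleGraph.induce s G').Walk u v), Rch G' T u.1 v.1 := by
    intro u v q
    induction q with
    | nil => rename_i f; exact rch_refl (hd _ f.2)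
    | @cons c d e h q ih =>
      have hadj : G'.Adj c.1 d.1 := h
      exact (rch_adj hadj (hd _ c.2) (hd _ d.2)).trans ih
  exact this _ _ q

/-- From 3-connectivity: no nonempty "closed" set with small boundary and nonempty outside. -/
lemma cutHelper {G : SimpleGraph V}
    (h3 : ∀ s : Set V, s.ncard ≤ 2 → (SimpleGraph.induce sᶜ G).Connected)
    (C W : Set V) (hC : C.ncard ≤ 2) (hWC : ∀ w ∈ W, w ∉ C) (hW : W.Nonempty)
    (hrest : ∃ v, v ∉ W ∧ v ∉ C)
    (hclosed : ∀ w ∈ W, ∀ z, G.Adj w z → z ∈ W ∪ C) : False := by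
  obtain ⟨a, ha⟩ := hW
  obtain ⟨b, hbW, hbC⟩ := hrest
  have hconn := h3 C hC
  have hrch : Rch G C a b :=
    induce_rch (s := Cᶜ) (T := C) (fun v hv => hv) hconn (hWC a ha) hbC
  obtain ⟨p, hp⟩ := hrch
  have main : ∀ (c e : V) (p : G.Walk c e), (∀ w ∈ p.support, w ∉ C) → c ∈ W → e ∈ W := by
    intro c e p
    induction p with
    | nil => exact fun _ h => h
    | @cons c d e h q ih =>
      intro hsup hcW
      have hdC : d ∉ C := hsup d (by simp [Walk.support_cons])
      have hdW : d ∈ W := by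
        rcases hclosed c hcW d h with h' | h'
        · exact h'
        · exact absurd h' hdC
      exact ih (fun w hw => hsup w (by simp [Walk.support_cons]; right; exact hw)) hdW
  exact hbW (main a b p hp ha)

lemma deg3 {G : SimpleGraph V} (h3 : ThreeConnected G) (hcard : 6 ≤ Nat.card V)
    (v : V) : 3 ≤ vdeg G v := by
  by_contra h
  push_neg at h
  have hC : (G.neighborSet v).ncard ≤ 2 := by
    unfold vdeg at h; omega
  have hrest : ∃ b, b ∉ ({v} : Set V) ∧ b ∉ G.neighborSet v := by
    by_contra hb
    push_neg at hb
    have huniv : (Set.univ : Set V) = insert v (G.neighborSet v) := by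
      apply Set.eq_univ_iff_forall.mpr ?_ |>.symm
      intro z
      by_cases hzv : z = v
      · simp [hzv]
      · exact Set.mem_insert_of_mem _ (hb z (by simp [hzv]))
    have h1 : (Set.univ : Set V).ncard ≤ 3 := by
      rw [huniv]
      calc (insert v (G.neighborSet v)).ncard ≤ (G.neighborSet v).ncard + 1 :=
            Set.ncard_insert_le _ _
        _ ≤ 3 := by omega
    rw [Set.ncard_univ] at h1
    omega
  refine cutHelper h3.2 (G.neighborSet v) {v} hC ?_ ⟨v, rfl⟩ hrest ?_
  · intro w hw
    simp at hw; subst hw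
    simp
  · intro w hw z hz
    simp at hw; subst hw
    exact Or.inr hz

lemma twoNbrs {G : SimpleGraph V} :
    ∀ {a b : V} (p : G.Walk a b), p.IsPath → ∀ s, s ∈ p.support → s ≠ a → s ≠ b →
    ∃ c d, c ≠ d ∧ G.Adj s c ∧ G.Adj s d ∧ c ∈ p.support ∧ d ∈ p.support := by
  intro a b p
  induction p with
  | nil =>
    intro _ s hs hsa _
    simp at hs
    exact absurd hs hsa
  | @cons a₁ c₁ b₁ h q ih =>
    intro hp s hs hsa hsb
    rw [Walk.cons_isPath_iff] at hp
    have hs' : s ∈ q.support := by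
      simp [Walk.support_cons] at hs
      rcases hs with h1 | h1
      · exact absurd h1 hsa
      · exact h1
    by_cases hsc : s = c₁
    · subst hsc
      cases q with
      | nil => exact absurd rfl hsb
      | @cons _ d _ h2 q' =>
        refine ⟨a₁, d, ?_, h.symm, h2, by simp [Walk.support_cons], by simp [Walk.support_cons]⟩
        intro had
        subst had
        exact hp.2 (by simp [Walk.support_cons])
    · obtain ⟨c', d', hne, h1, h2, h3, h4⟩ := ih hp.1 s hs' hsc hsb
      exact ⟨c', d', hne, h1, h2, by simp [Walk.support_cons]; right; exact h3,
        by simp [Walk.support_cons]; right; exact h4⟩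


lemma convSup {H : SimpleGraph V} [DecidableEq V] (Ts : Set {v : V // vdeg H v ≠ 2}) :
    ∀ (n : ℕ) (a b : V) (ha2 : vdeg H a ≠ 2) (hb2 : vdeg H b ≠ 2)
      (hA : (⟨a, ha2⟩ : {v : V // vdeg H v ≠ 2}) ∈ Tsᶜ)
      (hB : (⟨b, hb2⟩ : {v : V // vdeg H v ≠ 2}) ∈ Tsᶜ)
      (p : H.Walk a b), p.IsPath → p.length ≤ n →
      (∀ w ∈ p.support, ∀ h2 : vdeg H w ≠ 2, (⟨w, h2⟩ : {v : V // vdeg H v ≠ 2}) ∉ Ts) →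
      (SimpleGraph.induce Tsᶜ (suppress H)).Reachable ⟨⟨a, ha2⟩, hA⟩ ⟨⟨b, hb2⟩, hB⟩ := by
  intro n
  induction n with
  | zero =>
    intro a b ha2 hb2 hA hB p hp hlen hsup
    have hab : a = b := Walk.eq_of_length_eq_zero (Nat.le_zero.mp hlen)
    subst hab
    exact Reachable.refl _
  | succ n ih =>
    intro a b ha2 hb2 hA hB p hp hlen hsup
    by_cases hab : a = b
    · subst hab
      exact Reachable.refl _
    by_cases hmid : ∃ w ∈ p.support, w ≠ a ∧ w ≠ b ∧ vdeg H w ≠ 2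
    · obtain ⟨w, hw, hwa, hwb, hw2⟩ := hmid
      have hwTs : (⟨w, hw2⟩ : {v : V // vdeg H v ≠ 2}) ∈ Tsᶜ := hsup w hw hw2
      have hspec := p.take_spec hw
      have hlsum : (p.takeUntil w hw).length + (p.dropUntil w hw).length = p.length := by
        have := congrArg Walk.length hspec
        rwa [Walk.length_append] at this
      have h1 : 1 ≤ (p.takeUntil w hw).length := by
        by_contra hle
        exact hwa (Walk.eq_of_length_eq_zero (p := p.takeUntil w hw) (by omega)).symm
      have h2 : 1 ≤ (p.dropUntil w hw).length := by
        by_contra hle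
        exact hwb (Walk.eq_of_length_eq_zero (p := p.dropUntil w hw) (by omega))
      have hle1 : (p.takeUntil w hw).length ≤ n := by omega
      have hle2 : (p.dropUntil w hw).length ≤ n := by omega
      have r1 := ih a w ha2 hw2 hA hwTs (p.takeUntil w hw) (hp.takeUntil hw) hle1
        (fun z hz => hsup z (p.support_takeUntil_subset hw hz))
      have r2 := ih w b hw2 hb2 hwTs hB (p.dropUntil w hw) (hp.dropUntil hw) hle2
        (fun z hz => hsup z (p.support_dropUntil_subset hw hz))
      exact r1.trans r2
    · push_neg at hmid
      have hadj : (suppress H).Adj ⟨a, ha2⟩ ⟨b, hb2⟩ := by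
        refine ⟨by simp [Subtype.ext_iff]; exact hab, p, hp, ?_⟩
        intro w hw h1 h2
        by_contra h2d
        exact h2d (hmid w hw h1 h2)
      exact (SimpleGraph.Adj.reachable (by exact hadj :
        (SimpleGraph.induce Tsᶜ (suppress H)).Adj ⟨⟨a, ha2⟩, hA⟩ ⟨⟨b, hb2⟩, hB⟩))


lemma main_removable (G : SimpleGraph V) (h3 : ThreeConnected G)
    (hcard : 6 ≤ Nat.card V) (x y : V) (he : G.Adj x y)
    (S A B : Set V) (hS : S.ncard = 2) (hAB : Disjoint A B) (hcover : A ∪ B = Sᶜ)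
    (hA2 : 2 ≤ A.ncard) (hB2 : 2 ≤ B.ncard)
    (hAconn : (SimpleGraph.induce A (G.deleteEdges {s(x, y)})).Connected)
    (hBconn : (SimpleGraph.induce B (G.deleteEdges {s(x, y)})).Connected)
    (hnoadj : ∀ a ∈ A, ∀ b ∈ B, ¬ (G.deleteEdges {s(x, y)}).Adj a b)
    (hx : x ∈ A) (hy : y ∈ B)
    (u : V) (hu : u ∈ S) (huxadj : G.Adj u x) : Removable G u x := by
  classical
  have hfinV : Finite V := by
    by_contra hf
    rw [not_finite_iff_infinite] at hf
    rw [@Nat.card_eq_zero_of_infinite V hf] at hcard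
    omega
  -- the other vertex of S
  have hSut : ∃ t, S = {u, t} ∧ t ≠ u := by
    rcases Set.ncard_eq_two.mp hS with ⟨c, d, hcd, rfl⟩
    have hu' : u = c ∨ u = d := by simpa using hu
    rcases hu' with rfl | rfl
    · exact ⟨d, rfl, hcd.symm⟩
    · exact ⟨c, by rw [Set.pair_comm], hcd⟩
  obtain ⟨t, hSeq, htu⟩ := hSut
  have ht : t ∈ S := by rw [hSeq]; exact Set.mem_insert_of_mem _ rfl
  have memS : ∀ z ∈ S, z = u ∨ z = t := by
    intro z hz; rw [hSeq] at hz; simpa using hz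
  -- basic membership facts
  have hAS : ∀ a ∈ A, a ∉ S := fun a ha h => (hcover ▸ Set.mem_union_left B ha) h
  have hBS : ∀ b ∈ B, b ∉ S := fun b hb h => (hcover ▸ Set.mem_union_right A hb) h
  have hxS : x ∉ S := hAS x hx
  have hyS : y ∉ S := hBS y hy
  have huA : u ∉ A := fun h => hAS u h hu
  have huB : u ∉ B := fun h => hBS u h hu
  have htA : t ∉ A := fun h => hAS t h ht
  have htB : t ∉ B := fun h => hBS t h ht
  have hux : u ≠ x := fun h => huA (h ▸ hx)
  have huy : u ≠ y := fun h => huB (h ▸ hy)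
  have htx : t ≠ x := fun h => htA (h ▸ hx)
  have hty : t ≠ y := fun h => htB (h ▸ hy)
  have hxB : x ∉ B := Set.disjoint_left.mp hAB hx
  have hyA : y ∉ A := Set.disjoint_right.mp hAB hy
  have hxy : x ≠ y := he.ne
  have trich : ∀ z : V, u = z ∨ t = z ∨ z ∈ A ∨ z ∈ B := by
    intro z
    by_cases hz : z ∈ S
    · rcases memS z hz with h | h
      · exact Or.inl h.symm
      · exact Or.inr (Or.inl h.symm)
    · have : z ∈ A ∪ B := hcover ▸ hz
      rcases this with h | h
      · exact Or.inr (Or.inr (Or.inl h))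
      · exact Or.inr (Or.inr (Or.inr h))
  -- the only A-B edge of G is xy
  have hGAB : ∀ a ∈ A, ∀ b ∈ B, G.Adj a b → a = x ∧ b = y := by
    intro a ha b hb hadj'
    have hne := hnoadj a ha b hb
    rw [deleteEdges_adj] at hne
    push_neg at hne
    have hmem := hne hadj'
    simp only [Set.mem_singleton_iff, Sym2.eq_iff] at hmem
    rcases hmem with ⟨h1, h2⟩ | ⟨h1, h2⟩
    · exact ⟨h1, h2⟩
    · exact absurd (h1 ▸ ha) hyA
  set H := G.deleteEdges {s(u, x)} with hH
  have hHadj : ∀ c d : V, G.Adj c d → ¬((c = u ∧ d = x) ∨ (c = x ∧ d = u)) → H.Adj c d := by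
    intro c d h hnot
    rw [hH, deleteEdges_adj]
    refine ⟨h, ?_⟩
    simp only [Set.mem_singleton_iff, Sym2.eq_iff]
    exact hnot
  have hHadj' : ∀ c d : V, H.Adj c d → G.Adj c d := by
    intro c d h
    rw [hH, deleteEdges_adj] at h
    exact h.1
  -- connectivity of the sides in H
  have hindA : SimpleGraph.induce A H = SimpleGraph.induce A (G.deleteEdges {s(x, y)}) := by
    ext ⟨a, ha⟩ ⟨b, hb⟩
    simp only [comap_adj, Function.Embedding.coe_subtype, hH, deleteEdges_adj,
      Set.mem_singleton_iff, Sym2.eq_iff]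
    constructor
    · rintro ⟨h1, h2⟩
      refine ⟨h1, ?_⟩
      rintro (⟨rfl, rfl⟩ | ⟨rfl, rfl⟩)
      · exact hyA hb
      · exact hyA ha
    · rintro ⟨h1, h2⟩
      refine ⟨h1, ?_⟩
      rintro (⟨rfl, rfl⟩ | ⟨rfl, rfl⟩)
      · exact huA ha
      · exact huA hb
  have hindB : SimpleGraph.induce B H = SimpleGraph.induce B (G.deleteEdges {s(x, y)}) := by
    ext ⟨a, ha⟩ ⟨b, hb⟩
    simp only [comap_adj, Function.Embedding.coe_subtype, hH, deleteEdges_adj,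
      Set.mem_singleton_iff, Sym2.eq_iff]
    constructor
    · rintro ⟨h1, h2⟩
      refine ⟨h1, ?_⟩
      rintro (⟨rfl, rfl⟩ | ⟨rfl, rfl⟩)
      · exact hxB ha
      · exact hxB hb
    · rintro ⟨h1, h2⟩
      refine ⟨h1, ?_⟩
      rintro (⟨rfl, rfl⟩ | ⟨rfl, rfl⟩)
      · exact huB ha
      · exact hxB ha
  have hAconnH : (SimpleGraph.induce A H).Connected := by rw [hindA]; exact hAconn
  have hBconnH : (SimpleGraph.induce B H).Connected := by rw [hindB]; exact hBconn
  -- u has a neighbour in B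
  have huNbrB : ∃ b ∈ B, G.Adj u b := by
    by_contra hno
    push_neg at hno
    have hBne : (B \ {y}).Nonempty := by
      rw [Set.diff_nonempty]
      intro hsub
      have := Set.ncard_le_ncard hsub (Set.toFinite _)
      rw [Set.ncard_singleton] at this
      omega
    refine cutHelper h3.2 {t, y} (B \ {y}) ?_ ?_ hBne ⟨x, ?_, ?_⟩ ?_
    · calc ({t, y} : Set V).ncard ≤ ({y} : Set V).ncard + 1 := Set.ncard_insert_le _ _
        _ ≤ 2 := by rw [Set.ncard_singleton]
    · rintro w ⟨hwB, hwy⟩ (rfl | rfl)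
      · exact htB hwB
      · exact hwy rfl
    · rintro ⟨hxB', _⟩; exact hxB hxB'
    · rintro (rfl | rfl)
      · exact htx rfl
      · exact hxy rfl
    · rintro w ⟨hwB, hwy⟩ z hz
      rcases trich z with rfl | rfl | hzA | hzB
      · exact absurd hz.symm (hno w hwB)
      · exact Or.inr (Set.mem_insert _ _)
      · exfalso
        obtain ⟨hzx, hwy'⟩ := hGAB z hzA w hwB hz.symm
        exact hwy (by simpa using hwy')
      · by_cases hzy : z = y
        · exact Or.inr (by rw [hzy]; exact Set.mem_insert_of_mem _ rfl)
        · exact Or.inl ⟨hzB, hzy⟩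
  -- degrees
  have hdeg3 : ∀ v : V, 3 ≤ vdeg G v := deg3 h3 hcard
  have hNHu : H.neighborSet u = G.neighborSet u \ {x} := by
    refine Set.ext fun z => ⟨fun hz => ?_, fun hz => ?_⟩
    · have hz' : H.Adj u z := hz
      refine ⟨hHadj' u z hz', fun hzx => ?_⟩
      rw [hH, deleteEdges_adj] at hz'
      simp only [Set.mem_singleton_iff] at hzx
      exact hz'.2 (by rw [hzx]; exact Set.mem_singleton _)
    · obtain ⟨h1, h2⟩ := hz
      refine hHadj u z h1 ?_
      rintro (⟨_, rfl⟩ | ⟨rfl, _⟩)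
      · exact h2 rfl
      · exact hux rfl
  have hNHx : H.neighborSet x = G.neighborSet x \ {u} := by
    refine Set.ext fun z => ⟨fun hz => ?_, fun hz => ?_⟩
    · have hz' : H.Adj x z := hz
      refine ⟨hHadj' x z hz', fun hzu => ?_⟩
      rw [hH, deleteEdges_adj] at hz'
      simp only [Set.mem_singleton_iff] at hzu
      exact hz'.2 (by rw [hzu, Sym2.eq_swap]; exact Set.mem_singleton _)
    · obtain ⟨h1, h2⟩ := hz
      refine hHadj x z h1 ?_
      rintro (⟨hxu', _⟩ | ⟨_, hzu'⟩)
      · exact hux hxu'.symm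
      · exact h2 (Set.mem_singleton_iff.mpr hzu')
  have hvdegHu : vdeg H u = vdeg G u - 1 := by
    rw [vdeg, vdeg, hNHu, Set.ncard_diff_singleton_of_mem ((G.mem_neighborSet u x).mpr huxadj)]
  have hvdegHx : vdeg H x = vdeg G x - 1 := by
    rw [vdeg, vdeg, hNHx, Set.ncard_diff_singleton_of_mem ((G.mem_neighborSet x u).mpr huxadj.symm)]
  have hvdegO : ∀ v : V, v ≠ u → v ≠ x → vdeg H v = vdeg G v := by
    intro v hvu hvx
    have : H.neighborSet v = G.neighborSet v := by
      ext z
      simp only [mem_neighborSet, hH, deleteEdges_adj, Set.mem_singleton_iff, Sym2.eq_iff]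
      constructor
      · exact fun h => h.1
      · intro h
        refine ⟨h, ?_⟩
        rintro (⟨rfl, _⟩ | ⟨rfl, _⟩)
        · exact hvu rfl
        · exact hvx rfl
    rw [vdeg, vdeg, this]
  -- core separating-pair analysis
  have MC : ∀ T : Set V, T.ncard ≤ 2 → u ∉ T → x ∉ T → ¬ Rch H T u x →
      (∀ z, H.Adj u z → z ∈ T) ∨ (∀ z, H.Adj x z → z ∈ T) := by
    intro T hT huT hxT hns
    have hdisj : ∀ v, Rch H T u v → Rch H T x v → False :=
      fun v h h' => hns (h.trans h'.symm)
    have hclos1 : ∀ c d, Rch H T u c → H.Adj c d → d ∉ T → Rch H T u d :=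
      fun c d h hcd hd => h.trans (rch_adj hcd h.right_nmem hd)
    have hclos2 : ∀ c d, Rch H T x c → H.Adj c d → d ∉ T → Rch H T x d :=
      fun c d h hcd hd => h.trans (rch_adj hcd h.right_nmem hd)
    have P3 : ∀ c d, H.Adj c d → Rch H T u c → Rch H T x d → False :=
      fun c d hcd h1 h2 => hdisj d (hclos1 c d h1 hcd h2.right_nmem) h2
    have step : ∀ c d, G.Adj c d → c ∉ T → d ∉ T →
        (Rch H T u c ∨ Rch H T x c) → (Rch H T u d ∨ Rch H T x d) := by
      intro c d hcd hcT hdT hc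
      by_cases hpair : (c = u ∧ d = x) ∨ (c = x ∧ d = u)
      · rcases hpair with ⟨rfl, rfl⟩ | ⟨rfl, rfl⟩
        · exact Or.inr (rch_refl hdT)
        · exact Or.inl (rch_refl hdT)
      · have hHcd : H.Adj c d := hHadj c d hcd hpair
        rcases hc with h | h
        · exact Or.inl (hclos1 c d h hHcd hdT)
        · exact Or.inr (hclos2 c d h hHcd hdT)
    have P1 : ∀ v, v ∉ T → Rch H T u v ∨ Rch H T x v := by
      intro v hvT
      have hG : Rch G T u v :=
        induce_rch (s := Tᶜ) (fun z hz => hz) (h3.2 T hT) huT hvT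
      obtain ⟨p, hp⟩ := hG
      have walkind : ∀ (c e : V) (p : G.Walk c e), (∀ w ∈ p.support, w ∉ T) →
          (Rch H T u c ∨ Rch H T x c) → (Rch H T u e ∨ Rch H T x e) := by
        intro c e p
        induction p with
        | nil => exact fun _ h => h
        | @cons c₁ d₁ e₁ h q ih =>
          intro hsup hc
          have hdT : d₁ ∉ T := hsup d₁ (by simp [Walk.support_cons])
          have hcT : c₁ ∉ T := hsup c₁ (by simp [Walk.support_cons])
          exact ih (fun w hw => hsup w (by simp [Walk.support_cons]; right; exact hw))
            (step c₁ d₁ h hcT hdT hc)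
      exact walkind u v p hp (Or.inl (rch_refl huT))
    by_cases hN1 : ∀ z, H.Adj u z → z ∈ T
    · exact Or.inl hN1
    by_cases hN2 : ∀ z, H.Adj x z → z ∈ T
    · exact Or.inr hN2
    exfalso
    push_neg at hN1 hN2
    obtain ⟨z₁, hz₁adj, hz₁T⟩ := hN1
    obtain ⟨z₂, hz₂adj, hz₂T⟩ := hN2
    have hz₁D : Rch H T u z₁ := rch_adj hz₁adj huT hz₁T
    have hz₂D : Rch H T x z₂ := rch_adj hz₂adj hxT hz₂T
    have hz₁u : z₁ ≠ u := fun h => H.irrefl (h ▸ hz₁adj)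
    have hz₂x : z₂ ≠ x := fun h => H.irrefl (h ▸ hz₂adj)
    have hFy : ¬ Rch H T u y := by
      intro hry
      have hxyH : H.Adj x y := hHadj x y he (by
        rintro (⟨h', _⟩ | ⟨_, h'⟩)
        · exact hux h'.symm
        · exact huy h'.symm)
      exact P3 y x hxyH.symm hry (rch_refl hxT)
    have hFb : ∃ bs, bs ∈ B ∧ bs ∈ T := by
      by_contra hcon
      push_neg at hcon
      obtain ⟨b₀, hb₀B, hb₀adj⟩ := huNbrB
      have hHub : H.Adj u b₀ := hHadj u b₀ hb₀adj (by
        rintro (⟨_, h'⟩ | ⟨h', _⟩)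
        · exact hxB (h' ▸ hb₀B)
        · exact hux h')
      have h1 : Rch H T u b₀ := rch_adj hHub huT (hcon b₀ hb₀B)
      have h2 : Rch H T b₀ y := induce_rch (s := B) hcon hBconnH hb₀B hy
      exact hFy (h1.trans h2)
    obtain ⟨bs, hbsB, hbsT⟩ := hFb
    by_cases hAT : ∀ a ∈ A, a ∉ T
    · -- Cut (i) : {t, x}
      have hAD2 : ∀ a ∈ A, Rch H T x a := fun a ha => induce_rch (s := A) hAT hAconnH hx ha
      have hAx : (A \ {x}).Nonempty := by
        rw [Set.diff_nonempty]
        intro hsub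
        have := Set.ncard_le_ncard hsub (Set.toFinite _)
        rw [Set.ncard_singleton] at this
        omega
      refine cutHelper h3.2 {t, x} (A \ {x}) ?_ ?_ hAx ⟨u, ?_, ?_⟩ ?_
      · calc ({t, x} : Set V).ncard ≤ ({x} : Set V).ncard + 1 := Set.ncard_insert_le _ _
          _ ≤ 2 := by rw [Set.ncard_singleton]
      · rintro w ⟨hwA, hwx⟩ (h | h)
        · exact htA (h ▸ hwA)
        · exact hwx (Set.mem_singleton_iff.mpr h)
      · rintro ⟨h', _⟩; exact huA h'
      · rintro (h | h)
        · exact htu h.symm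
        · exact hux h
      · rintro w ⟨hwA, hwx⟩ z hz
        have hwx' : w ≠ x := fun h => hwx (Set.mem_singleton_iff.mpr h)
        rcases trich z with rfl | rfl | hzA | hzB
        · exfalso
          have hHwz : H.Adj w u := hHadj w u hz (by
            rintro (⟨h', _⟩ | ⟨h', _⟩)
            · exact huA (h' ▸ hwA)
            · exact hwx' h')
          exact P3 u w hHwz.symm (rch_refl huT) (hAD2 w hwA)
        · exact Or.inr (Set.mem_insert _ _)
        · by_cases hzx : z = x
          · exact Or.inr (by rw [hzx]; exact Set.mem_insert_of_mem _ rfl)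
          · exact Or.inl ⟨hzA, fun h => hzx (Set.mem_singleton_iff.mp h)⟩
        · exact absurd (hGAB w hwA z hzB hz).1 hwx'
    · push_neg at hAT
      obtain ⟨as, hasA, hasT⟩ := hAT
      have hasbs : as ≠ bs := fun h => (Set.disjoint_left.mp hAB hasA) (h ▸ hbsB)
      have hTeq : T = {as, bs} := by
        refine (Set.eq_of_subset_of_ncard_le ?_ ?_ (Set.toFinite _)).symm
        · rintro z (h | h)
          · exact h ▸ hasT
          · exact (Set.mem_singleton_iff.mp h) ▸ hbsT
        · rw [Set.ncard_pair hasbs]; exact hT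
      have hmemT : ∀ z ∈ T, z = as ∨ z = bs := by
        intro z hz; rw [hTeq] at hz; simpa using hz
      have htT : t ∉ T := by
        intro h
        rcases hmemT t h with rfl | rfl
        · exact htA hasA
        · exact htB hbsB
      have hxas : x ≠ as := fun h => hxT (h ▸ hasT)
      have hxbs : x ≠ bs := fun h => hxT (h ▸ hbsT)
      have huas : u ≠ as := fun h => huT (h ▸ hasT)
      have hubs : u ≠ bs := fun h => huT (h ▸ hbsT)
      rcases P1 t htT with htD1 | htD2
      · -- t on u's side
        by_cases hW : ∃ w, w ∈ A ∧ w ≠ x ∧ Rch H T x w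
        · -- Cut (v) : {as, x}
          obtain ⟨w₀, hw₀⟩ := hW
          refine cutHelper h3.2 {as, x} {w | w ∈ A ∧ w ≠ x ∧ Rch H T x w} ?_ ?_ ⟨w₀, hw₀⟩
            ⟨u, ?_, ?_⟩ ?_
          · calc ({as, x} : Set V).ncard ≤ ({x} : Set V).ncard + 1 := Set.ncard_insert_le _ _
              _ ≤ 2 := by rw [Set.ncard_singleton]
          · rintro w ⟨hwA, hwx, hwr⟩ (h | h)
            · exact hwr.right_nmem (h ▸ hasT)
            · exact hwx (Set.mem_singleton_iff.mp h)
          · rintro ⟨h', _, _⟩; exact huA h'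
          · rintro (h | h)
            · exact huas h
            · exact hux (Set.mem_singleton_iff.mp h)
          · rintro w ⟨hwA, hwx, hwr⟩ z hz
            rcases trich z with rfl | rfl | hzA | hzB
            · exfalso
              have hHwz : H.Adj w u := hHadj w u hz (by
                rintro (⟨h', _⟩ | ⟨h', _⟩)
                · exact huA (h' ▸ hwA)
                · exact hwx h')
              exact P3 u w hHwz.symm (rch_refl huT) hwr
            · exfalso
              have hHwz : H.Adj w t := hHadj w t hz (by
                rintro (⟨h', _⟩ | ⟨h', _⟩)
                · exact huA (h' ▸ hwA)
                · exact hwx h')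
              exact P3 t w hHwz.symm htD1 hwr
            · by_cases hzx : z = x
              · exact Or.inr (by rw [hzx]; exact Set.mem_insert_of_mem _ rfl)
              · by_cases hzas : z = as
                · exact Or.inr (by rw [hzas]; exact Set.mem_insert _ _)
                · have hzT : z ∉ T := by
                    intro h
                    rcases hmemT z h with rfl | rfl
                    · exact hzas rfl
                    · exact (Set.disjoint_left.mp hAB hzA) hbsB
                  have hHwz : H.Adj w z := hHadj w z hz (by
                    rintro (⟨h', _⟩ | ⟨_, h'⟩)
                    · exact huA (h' ▸ hwA)
                    · exact huA (h' ▸ hzA))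
                  exact Or.inl ⟨hzA, hzx, hclos2 w z hwr hHwz hzT⟩
            · exact absurd (hGAB w hwA z hzB hz).1 hwx
        · -- Cut (iv) : {bs, x}
          push_neg at hW
          have hz₂B : z₂ ∈ B ∧ Rch H T x z₂ := by
            rcases trich z₂ with rfl | rfl | hzA | hzB
            · exact (hdisj u (rch_refl huT) hz₂D).elim
            · exact (hdisj t htD1 hz₂D).elim
            · exact (hW z₂ hzA hz₂x hz₂D).elim
            · exact ⟨hzB, hz₂D⟩
          refine cutHelper h3.2 {bs, x} {w | w ∈ B ∧ Rch H T x w} ?_ ?_ ⟨z₂, hz₂B⟩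
            ⟨u, ?_, ?_⟩ ?_
          · calc ({bs, x} : Set V).ncard ≤ ({x} : Set V).ncard + 1 := Set.ncard_insert_le _ _
              _ ≤ 2 := by rw [Set.ncard_singleton]
          · rintro w ⟨hwB, hwr⟩ (h | h)
            · exact hwr.right_nmem (h ▸ hbsT)
            · exact hxB ((Set.mem_singleton_iff.mp h) ▸ hwB)
          · rintro ⟨h', _⟩; exact huB h'
          · rintro (h | h)
            · exact hubs h
            · exact hux (Set.mem_singleton_iff.mp h)
          · rintro w ⟨hwB, hwr⟩ z hz
            rcases trich z with rfl | rfl | hzA | hzB'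
            · exfalso
              have hHwz : H.Adj w u := hHadj w u hz (by
                rintro (⟨h', _⟩ | ⟨h', _⟩)
                · exact huB (h' ▸ hwB)
                · exact hxB (h' ▸ hwB))
              exact P3 u w hHwz.symm (rch_refl huT) hwr
            · exfalso
              have hHwz : H.Adj w t := hHadj w t hz (by
                rintro (⟨h', _⟩ | ⟨h', _⟩)
                · exact huB (h' ▸ hwB)
                · exact hxB (h' ▸ hwB))
              exact P3 t w hHwz.symm htD1 hwr
            · have hh := hGAB z hzA w hwB hz.symm
              exact Or.inr (by rw [hh.1]; exact Set.mem_insert_of_mem _ rfl)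
            · by_cases hzbs : z = bs
              · exact Or.inr (by rw [hzbs]; exact Set.mem_insert _ _)
              · have hzT : z ∉ T := by
                  intro h
                  rcases hmemT z h with rfl | rfl
                  · exact (Set.disjoint_left.mp hAB hasA) hzB'
                  · exact hzbs rfl
                have hHwz : H.Adj w z := hHadj w z hz (by
                  rintro (⟨h', _⟩ | ⟨h', _⟩)
                  · exact huB (h' ▸ hwB)
                  · exact hxB (h' ▸ hwB))
                exact Or.inl ⟨hzB', hclos2 w z hwr hHwz hzT⟩
      · -- t on x's side
        by_cases hW : ∃ w, w ∈ A ∧ Rch H T u w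
        · -- Cut (ii) : {as, u}
          obtain ⟨w₀, hw₀⟩ := hW
          have hxW : ∀ w, w ∈ A → Rch H T u w → w ≠ x := fun w hwA hwr h => hns (h ▸ hwr)
          refine cutHelper h3.2 {as, u} {w | w ∈ A ∧ Rch H T u w} ?_ ?_ ⟨w₀, hw₀⟩
            ⟨x, ?_, ?_⟩ ?_
          · calc ({as, u} : Set V).ncard ≤ ({u} : Set V).ncard + 1 := Set.ncard_insert_le _ _
              _ ≤ 2 := by rw [Set.ncard_singleton]
          · rintro w ⟨hwA, hwr⟩ (h | h)
            · exact hwr.right_nmem (h ▸ hasT)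
            · exact huA ((Set.mem_singleton_iff.mp h) ▸ hwA)
          · rintro ⟨_, h'⟩; exact hns h'
          · rintro (h | h)
            · exact hxas h
            · exact hux (Set.mem_singleton_iff.mp h).symm
          · rintro w ⟨hwA, hwr⟩ z hz
            have hwx : w ≠ x := hxW w hwA hwr
            rcases trich z with rfl | rfl | hzA | hzB
            · exact Or.inr (Set.mem_insert_of_mem _ rfl)
            · exfalso
              have hHwz : H.Adj w t := hHadj w t hz (by
                rintro (⟨h', _⟩ | ⟨h', _⟩)
                · exact huA (h' ▸ hwA)
                · exact hwx h')
              exact P3 w t hHwz hwr htD2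
            · by_cases hzas : z = as
              · exact Or.inr (by rw [hzas]; exact Set.mem_insert _ _)
              · have hzT : z ∉ T := by
                  intro h
                  rcases hmemT z h with rfl | rfl
                  · exact hzas rfl
                  · exact (Set.disjoint_left.mp hAB hzA) hbsB
                have hHwz : H.Adj w z := hHadj w z hz (by
                  rintro (⟨h', _⟩ | ⟨_, h'⟩)
                  · exact huA (h' ▸ hwA)
                  · exact huA (h' ▸ hzA))
                exact Or.inl ⟨hzA, hclos1 w z hwr hHwz hzT⟩
            · exact absurd (hGAB w hwA z hzB hz).1 hwx
        · -- Cut (iii) : {bs, u}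
          push_neg at hW
          have hz₁B : z₁ ∈ B ∧ Rch H T u z₁ := by
            rcases trich z₁ with rfl | rfl | hzA | hzB
            · exact (hz₁u rfl).elim
            · exact (hdisj t hz₁D htD2).elim
            · exact (hW z₁ hzA hz₁D).elim
            · exact ⟨hzB, hz₁D⟩
          refine cutHelper h3.2 {bs, u} {w | w ∈ B ∧ Rch H T u w} ?_ ?_ ⟨z₁, hz₁B⟩
            ⟨x, ?_, ?_⟩ ?_
          · calc ({bs, u} : Set V).ncard ≤ ({u} : Set V).ncard + 1 := Set.ncard_insert_le _ _
              _ ≤ 2 := by rw [Set.ncard_singleton]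
          · rintro w ⟨hwB, hwr⟩ (h | h)
            · exact hwr.right_nmem (h ▸ hbsT)
            · exact huB ((Set.mem_singleton_iff.mp h) ▸ hwB)
          · rintro ⟨h', _⟩; exact hxB h'
          · rintro (h | h)
            · exact hxbs h
            · exact hux (Set.mem_singleton_iff.mp h).symm
          · rintro w ⟨hwB, hwr⟩ z hz
            rcases trich z with rfl | rfl | hzA | hzB'
            · exact Or.inr (Set.mem_insert_of_mem _ rfl)
            · exfalso
              have hHwz : H.Adj w t := hHadj w t hz (by
                rintro (⟨h', _⟩ | ⟨h', _⟩)
                · exact huB (h' ▸ hwB)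
                · exact hxB (h' ▸ hwB))
              exact P3 w t hHwz hwr htD2
            · exfalso
              have hh := hGAB z hzA w hwB hz.symm
              exact hFy (hh.2 ▸ hwr)
            · by_cases hzbs : z = bs
              · exact Or.inr (by rw [hzbs]; exact Set.mem_insert _ _)
              · have hzT : z ∉ T := by
                  intro h
                  rcases hmemT z h with rfl | rfl
                  · exact (Set.disjoint_left.mp hAB hasA) hzB'
                  · exact hzbs rfl
                have hHwz : H.Adj w z := hHadj w z hz (by
                  rintro (⟨h', _⟩ | ⟨h', _⟩)
                  · exact huB (h' ▸ hwB)
                  · exact hxB (h' ▸ hwB))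
                exact Or.inl ⟨hzB', hclos1 w z hwr hHwz hzT⟩
  -- main transfer lemma
  have MT : ∀ T : Set V, T.ncard ≤ 2 → ∀ a b : V, a ∉ T → b ∉ T →
      vdeg H a ≠ 2 → vdeg H b ≠ 2 → Rch H T a b := by
    intro T hT a b haT hbT ha2 hb2
    have hG : Rch G T a b := induce_rch (s := Tᶜ) (fun z hz => hz) (h3.2 T hT) haT hbT
    have GtoH : (∀ c d, c ∉ T → d ∉ T → ((c = u ∧ d = x) ∨ (c = x ∧ d = u)) → Rch H T c d) →
        Rch H T a b := by
      intro hdet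
      obtain ⟨p, hp⟩ := hG
      have walkind : ∀ (c e : V) (p : G.Walk c e), (∀ w ∈ p.support, w ∉ T) → Rch H T c e := by
        intro c e p
        induction p with
        | nil => intro hsup; exact rch_refl (hsup _ (Walk.start_mem_support _))
        | @cons c₁ d₁ e₁ h q ih =>
          intro hsup
          have hcT : c₁ ∉ T := hsup c₁ (by simp [Walk.support_cons])
          have hdT : d₁ ∉ T := hsup d₁ (by simp [Walk.support_cons])
          have hrest : Rch H T d₁ e₁ :=
            ih (fun w hw => hsup w (by simp [Walk.support_cons]; right; exact hw))
          by_cases hpair : (c₁ = u ∧ d₁ = x) ∨ (c₁ = x ∧ d₁ = u)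
          · exact (hdet c₁ d₁ hcT hdT hpair).trans hrest
          · exact (rch_adj (hHadj c₁ d₁ h hpair) hcT hdT).trans hrest
      exact walkind a b p hp
    by_cases hmemT : u ∈ T ∨ x ∈ T
    · refine GtoH ?_
      rintro c d hcT hdT (⟨rfl, rfl⟩ | ⟨rfl, rfl⟩) <;> rcases hmemT with h | h <;>
        first
          | exact absurd h hcT
          | exact absurd h hdT
    push_neg at hmemT
    obtain ⟨huT, hxT⟩ := hmemT
    by_cases hr : Rch H T u x
    · refine GtoH ?_
      rintro c d _ _ (⟨rfl, rfl⟩ | ⟨rfl, rfl⟩)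
      · exact hr
      · exact hr.symm
    · rcases MC T hT huT hxT hr with hN | hN
      · -- u is suppressed: paths can avoid u
        have hdegu2 : vdeg H u = 2 := by
          have hsub : H.neighborSet u ⊆ T := fun z hz => hN z hz
          have h1 : vdeg H u ≤ 2 := le_trans (Set.ncard_le_ncard hsub (Set.toFinite _)) hT
          have h2 := hdeg3 u
          omega
        have hau : a ≠ u := fun h => ha2 (h ▸ hdegu2)
        have hbu : b ≠ u := fun h => hb2 (h ▸ hdegu2)
        obtain ⟨p0, hp0⟩ := hG
        have hpPath := p0.bypass_isPath
        have hpsup : ∀ w ∈ p0.bypass.support, w ∉ T :=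
          fun w hw => hp0 w (p0.support_bypass_subset hw)
        have hu_not : u ∉ p0.bypass.support := by
          intro husup
          obtain ⟨c, d, hcd, hc, hd, hcs, hds⟩ :=
            twoNbrs p0.bypass hpPath u husup (Ne.symm hau) (Ne.symm hbu)
          have key : ∀ z, G.Adj u z → z ∈ p0.bypass.support → z = x := by
            intro z hz hzs
            by_contra hzx
            have hHuz : H.Adj u z := hHadj u z hz (by
              rintro (⟨_, h'⟩ | ⟨h', _⟩)
              · exact hzx h'
              · exact hux h')
            exact hpsup z hzs (hN z hHuz)
          exact hcd ((key c hc hcs).trans (key d hd hds).symm)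
        have hedge : ∀ e ∈ p0.bypass.edges, e ∈ H.edgeSet := by
          intro e he'
          have heG : e ∈ G.edgeSet := p0.bypass.edges_subset_edgeSet he'
          rw [hH, edgeSet_deleteEdges]
          refine ⟨heG, ?_⟩
          intro hmem
          rw [Set.mem_singleton_iff] at hmem
          exact hu_not (p0.bypass.fst_mem_support_of_mem_edges (hmem ▸ he'))
        exact ⟨p0.bypass.transfer H hedge, by rw [Walk.support_transfer]; exact hpsup⟩
      · -- x is suppressed: paths can avoid x
        have hdegx2 : vdeg H x = 2 := by
          have hsub : H.neighborSet x ⊆ T := fun z hz => hN z hz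
          have h1 : vdeg H x ≤ 2 := le_trans (Set.ncard_le_ncard hsub (Set.toFinite _)) hT
          have h2 := hdeg3 x
          omega
        have hax : a ≠ x := fun h => ha2 (h ▸ hdegx2)
        have hbx : b ≠ x := fun h => hb2 (h ▸ hdegx2)
        obtain ⟨p0, hp0⟩ := hG
        have hpPath := p0.bypass_isPath
        have hpsup : ∀ w ∈ p0.bypass.support, w ∉ T :=
          fun w hw => hp0 w (p0.support_bypass_subset hw)
        have hx_not : x ∉ p0.bypass.support := by
          intro hxsup
          obtain ⟨c, d, hcd, hc, hd, hcs, hds⟩ :=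
            twoNbrs p0.bypass hpPath x hxsup (Ne.symm hax) (Ne.symm hbx)
          have key : ∀ z, G.Adj x z → z ∈ p0.bypass.support → z = u := by
            intro z hz hzs
            by_contra hzu
            have hHxz : H.Adj x z := hHadj x z hz (by
              rintro (⟨h', _⟩ | ⟨_, h'⟩)
              · exact hux h'.symm
              · exact hzu h')
            exact hpsup z hzs (hN z hHxz)
          exact hcd ((key c hc hcs).trans (key d hd hds).symm)
        have hedge : ∀ e ∈ p0.bypass.edges, e ∈ H.edgeSet := by
          intro e he'
          have heG : e ∈ G.edgeSet := p0.bypass.edges_subset_edgeSet he'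
          rw [hH, edgeSet_deleteEdges]
          refine ⟨heG, ?_⟩
          intro hmem
          rw [Set.mem_singleton_iff] at hmem
          exact hx_not (p0.bypass.snd_mem_support_of_mem_edges (hmem ▸ he'))
        exact ⟨p0.bypass.transfer H hedge, by rw [Walk.support_transfer]; exact hpsup⟩
  -- final assembly
  have hcard4 : 4 ≤ Nat.card {v : V // vdeg H v ≠ 2} := by
    have hsub : ({u, x} : Set V)ᶜ ⊆ {v : V | vdeg H v ≠ 2} := by
      intro v hv
      simp only [Set.mem_compl_iff, Set.mem_insert_iff, Set.mem_singleton_iff, not_or] at hv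
      have hvd := hvdegO v hv.1 hv.2
      have := hdeg3 v
      simp only [Set.mem_setOf_eq, hvd]
      omega
    have h1 : ({u, x} : Set V).ncard + (({u, x} : Set V)ᶜ).ncard = Nat.card V :=
      Set.ncard_add_ncard_compl _
    have h2 : ({u, x} : Set V).ncard ≤ 2 := by
      calc ({u, x} : Set V).ncard ≤ ({x} : Set V).ncard + 1 := Set.ncard_insert_le _ _
        _ ≤ 2 := by rw [Set.ncard_singleton]
    have h5 : (({u, x} : Set V)ᶜ).ncard ≤ ({v : V | vdeg H v ≠ 2}).ncard :=
      Set.ncard_le_ncard hsub (Set.toFinite _)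
    have h6 : 4 ≤ ({v : V | vdeg H v ≠ 2}).ncard := by omega
    rw [← Nat.card_coe_set_eq] at h6
    exact h6
  show ThreeConnected (suppress H)
  refine ⟨hcard4, ?_⟩
  intro Ts hTs
  have hTcard : (Subtype.val '' Ts : Set V).ncard ≤ 2 := by
    rw [Set.ncard_image_of_injective _ Subtype.val_injective]; exact hTs
  have hmemT'' : ∀ (w : V) (h2 : vdeg H w ≠ 2),
      (⟨w, h2⟩ : {v : V // vdeg H v ≠ 2}) ∈ Tsᶜ → w ∉ (Subtype.val '' Ts : Set V) := by
    intro w h2 hmem hw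
    obtain ⟨w', hw', hval⟩ := hw
    have hww : w' = ⟨w, h2⟩ := Subtype.ext hval
    exact hmem (hww ▸ hw')
  have hne : Nonempty ↥Tsᶜ := by
    refine Set.Nonempty.to_subtype ?_
    rw [Set.nonempty_compl]
    intro huniv
    rw [huniv, Set.ncard_univ] at hTs
    omega
  haveI := hne
  refine ⟨?_⟩
  rintro ⟨⟨a, ha2⟩, haTs⟩ ⟨⟨b, hb2⟩, hbTs⟩
  have haT : a ∉ (Subtype.val '' Ts : Set V) := hmemT'' a ha2 haTs
  have hbT : b ∉ (Subtype.val '' Ts : Set V) := hmemT'' b hb2 hbTs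
  obtain ⟨p0, hp0⟩ := MT (Subtype.val '' Ts) hTcard a b haT hbT ha2 hb2
  exact convSup Ts p0.bypass.length a b ha2 hb2 haTs hbTs p0.bypass p0.bypass_isPath le_rfl
    (fun w hw h2 hmem => (hp0 w (p0.support_bypass_subset hw)) ⟨⟨w, h2⟩, hmem, rfl⟩)


/-- Holton–Jackson–Saito–Wormald, Theorem 2: if `(e, S)` is a
separating pair of a simple triconnected graph of order at least six, with
`e = xy`, `x ∈ A`, `y ∈ B` the two components of `G - e - S`, then every edge
joining `S` and `{x, y}` is removable. -/
theorem stmt_7 (G : SimpleGraph V) (h3 : ThreeConnected G)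
    (hcard : 6 ≤ Nat.card V) (x y : V) (he : G.Adj x y)
    (S A B : Set V) (hS : S.ncard = 2) (hAB : Disjoint A B) (hcover : A ∪ B = Sᶜ)
    (hA2 : 2 ≤ A.ncard) (hB2 : 2 ≤ B.ncard)
    (hAconn : (SimpleGraph.induce A (G.deleteEdges {s(x, y)})).Connected)
    (hBconn : (SimpleGraph.induce B (G.deleteEdges {s(x, y)})).Connected)
    (hnoadj : ∀ a ∈ A, ∀ b ∈ B, ¬ (G.deleteEdges {s(x, y)}).Adj a b)
    (hx : x ∈ A) (hy : y ∈ B) :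
    ∀ s ∈ S, ∀ z ∈ ({x, y} : Set V), G.Adj s z → Removable G s z := by
  intro s hs z hz hadj
  have hswap : (s(y, x) : Sym2 V) = s(x, y) := Sym2.eq_swap
  simp only [Set.mem_insert_iff, Set.mem_singleton_iff] at hz
  rcases hz with h | h
  · rw [h] at hadj ⊢
    exact main_removable G h3 hcard x y he S A B hS hAB hcover hA2 hB2 hAconn hBconn hnoadj
      hx hy s hs hadj
  · rw [h] at hadj ⊢
    have hnoadj' : ∀ b ∈ B, ∀ a ∈ A, ¬ (G.deleteEdges {s(y, x)}).Adj b a := by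
      intro b hb a ha hadj'
      rw [hswap] at hadj'
      exact hnoadj a ha b hb hadj'.symm
    have hBconn' : (SimpleGraph.induce B (G.deleteEdges {s(y, x)})).Connected := by
      rw [hswap]; exact hBconn
    have hAconn' : (SimpleGraph.induce A (G.deleteEdges {s(y, x)})).Connected := by
      rw [hswap]; exact hAconn
    exact main_removable G h3 hcard y x he.symm S B A hS hAB.symm
      (by rw [Set.union_comm]; exact hcover) hB2 hA2 hBconn' hAconn' hnoadj' hy hx s hs hadj
end

section
/- Let k ≥ 1 and let G be a multigraph obtained by taking a path P* with vertex multiset containing six (not necessarily distinct, pairwise order-compatible) marked vertices together with a parallel copy of every edge of P* and an extra path P_b joining the two endpoints of P*, internally disjoint from P*. Then for any three pairs {x_1,x_2}, {y_1,y_2}, {z_1,z_2} of marked vertices on P*, G contains three pairwise edge-disjoint paths joining x_1 to x_2, y_1 to y_2, and z_1 to z_2 respectively. -/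
universe u

variable {V : Type u}

/-- A loopless multigraph given by edge multiplicities. -/
structure MGraph (V : Type u) where
  m : Sym2 V → ℕ
  loopless : ∀ v : V, m s(v, v) = 0

/-- Adjacency in a multigraph. -/
def MGraph.Adj (G : MGraph V) (a b : V) : Prop := 0 < G.m s(a, b)

/-- A simple path from `x` to `y`, given as its list of vertices. -/
def MGraph.IsPathL (G : MGraph V) (x y : V) (l : List V) : Prop :=
  l.head? = some x ∧ l.getLast? = some y ∧ l.Nodup ∧ l.Chain' G.Adj

/-- The path (vertex list) `l` uses the edge `e`. -/
def usesEdge (l : List V) (e : Sym2 V) : Prop :=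
  ∃ p ∈ l.zip l.tail, s(p.1, p.2) = e

/-- There are `k` internally vertex-disjoint `x`-`y` paths, respecting edge
multiplicities (parallel edges may be used by distinct paths). -/
def MGraph.ConnKM (G : MGraph V) (k : ℕ) (x y : V) : Prop :=
  ∃ P : Fin k → List V, (∀ i, G.IsPathL x y (P i)) ∧
    (∀ i j, i ≠ j → ∀ v ∈ P i, v ∈ P j → v = x ∨ v = y) ∧
    ∀ e : Sym2 V, Nat.card {i : Fin k // usesEdge (P i) e} ≤ G.m e

open scoped Classical in
/-- Delete one copy of the edge `e`. -/
noncomputable def MGraph.delE (G : MGraph V) (e : Sym2 V) : MGraph V where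
  m f := if f = e then G.m f - 1 else G.m f
  loopless := by intro v; split <;> simp [G.loopless v]

open scoped Classical in
/-- Delete the vertex `v` (remove all edges at `v`). -/
noncomputable def MGraph.delV (G : MGraph V) (v : V) : MGraph V where
  m f := if v ∈ f then 0 else G.m f
  loopless := by intro w; split <;> simp [G.loopless w]

/-- `G` is `Q`-triconnected. -/
def MGraph.QTri (G : MGraph V) (Q : Set V) : Prop :=
  ∀ x ∈ Q, ∀ y ∈ Q, x ≠ y → G.ConnKM 3 x y

/-- `G` is minimally `Q`-triconnected: deleting any edge or vertex destroys
`Q`-triconnectivity. -/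
def MGraph.MinQTri (G : MGraph V) (Q : Set V) : Prop :=
  G.QTri Q ∧ (∀ e : Sym2 V, 0 < G.m e → ¬ (G.delE e).QTri Q) ∧
    ∀ v : V, ¬ (G.delV v).QTri Q

/-- The degree of a vertex, counting multiplicities. -/
noncomputable def MGraph.deg [Fintype V] (G : MGraph V) (v : V) : ℕ :=
  ∑ u : V, G.m s(v, u)

/-- The number of times the vertex list `l` traverses the edge `{a, b}`. -/
def edgeCount [DecidableEq V] (l : List V) (a b : V) : ℕ :=
  (l.zip l.tail).count (a, b) + (l.zip l.tail).count (b, a)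



section Aux
variable [DecidableEq V]
set_option linter.unusedSectionVars false

/-- Adjacent-pair list. -/
private def zipAdj (l : List V) : List (V × V) := l.zip l.tail

private lemma zipAdj_cons₂ (x y : V) (l : List V) :
    zipAdj (x :: y :: l) = (x, y) :: zipAdj (y :: l) := rfl

private lemma mem_zipAdj_iff {l : List V} {p q : V} :
    (p, q) ∈ zipAdj l ↔ ∃ t, l[t]? = some p ∧ l[t+1]? = some q := by
  induction l with
  | nil => simp [zipAdj]
  | cons x xs ih =>
    cases xs with
    | nil => simp [zipAdj]
    | cons y ys =>
      rw [zipAdj_cons₂]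
      constructor
      · intro h
        rcases List.mem_cons.1 h with h | h
        · rw [Prod.mk.injEq] at h
          exact ⟨0, by simp [h.1], by simp [h.2]⟩
        · obtain ⟨t, h1, h2⟩ := ih.1 h
          exact ⟨t+1, by rw [List.getElem?_cons_succ]; exact h1,
            by rw [List.getElem?_cons_succ]; exact h2⟩
      · rintro ⟨t, h1, h2⟩
        cases t with
        | zero =>
          simp at h1 h2
          subst h1; subst h2
          exact List.mem_cons_self
        | succ t =>
          rw [List.getElem?_cons_succ] at h1
          rw [List.getElem?_cons_succ] at h2
          exact List.mem_cons_of_mem _ (ih.2 ⟨t, h1, h2⟩)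

private lemma zipAdj_map_fst (l : List V) : (zipAdj l).map Prod.fst = l.dropLast := by
  induction l with
  | nil => rfl
  | cons x xs ih =>
    cases xs with
    | nil => rfl
    | cons y ys =>
      rw [zipAdj_cons₂, List.map_cons, ih]
      rfl

private lemma zipAdj_nodup {l : List V} (h : l.Nodup) : (zipAdj l).Nodup := by
  have := h.sublist (l.dropLast_sublist)
  rw [← zipAdj_map_fst] at this
  exact this.of_map _

private lemma zipAdj_append {l₁ l₂ : List V} (h₁ : l₁ ≠ []) (h₂ : l₂ ≠ []) :
    zipAdj (l₁ ++ l₂) = zipAdj l₁ ++ (l₁.getLast h₁, l₂.head h₂) :: zipAdj l₂ := by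
  induction l₁ with
  | nil => exact absurd rfl h₁
  | cons a t ih =>
    cases t with
    | nil =>
      cases l₂ with
      | nil => exact absurd rfl h₂
      | cons b s => rfl
    | cons b t' =>
      have : (a :: b :: t') ++ l₂ = a :: b :: (t' ++ l₂) := rfl
      rw [this, zipAdj_cons₂]
      have h' : (b :: t') ≠ [] := by simp
      have := ih h'
      rw [show (b :: t') ++ l₂ = b :: (t' ++ l₂) from rfl] at this
      rw [this]
      rfl

private lemma zipAdj_reverse (l : List V) {p q : V} :
    (p, q) ∈ zipAdj l.reverse ↔ (q, p) ∈ zipAdj l := by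
  induction l with
  | nil => simp [zipAdj]
  | cons x xs ih =>
    cases xs with
    | nil => simp [zipAdj]
    | cons y ys =>
      have hrev : (y :: ys).reverse ≠ [] := by simp
      have : (x :: y :: ys).reverse = (y :: ys).reverse ++ [x] := by simp
      rw [this, zipAdj_append hrev (by simp), zipAdj_cons₂]
      have hl : ((y :: ys).reverse).getLast hrev = y := by
        rw [List.getLast_reverse]; rfl
      have hh : ([x] : List V).head (by simp) = x := rfl
      rw [hl, hh]
      constructor
      · intro h
        rcases List.mem_append.1 h with h | h
        · exact List.mem_cons_of_mem _ (ih.1 h)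
        · rcases List.mem_cons.1 h with h | h
          · rw [Prod.mk.injEq] at h
            exact List.mem_cons.2 (Or.inl (by simp [h.1, h.2]))
          · simp [zipAdj] at h
      · intro h
        rcases List.mem_cons.1 h with h | h
        · rw [Prod.mk.injEq] at h
          exact List.mem_append.2 (Or.inr (by simp [h.1, h.2]))
        · exact List.mem_append.2 (Or.inl (ih.2 h))

end Aux

section Aux2
variable [DecidableEq V]
set_option linter.unusedSectionVars false

private lemma count_inst_irrel {α : Type*} [BEq α] [LawfulBEq α] [DecidableEq α] (l : List α) (a : α) :
    l.count a = @List.count α instBEqOfDecidableEq a l := by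
  induction l with
  | nil => rfl
  | cons b t ih => simp [List.count_cons, ih, beq_iff_eq]

private lemma count_le_one_of_nodup {α : Type*} [BEq α] [LawfulBEq α] [DecidableEq α] {l : List α} (h : l.Nodup) (a : α) :
    l.count a ≤ 1 := by
  rw [count_inst_irrel]
  exact (@List.nodup_iff_count_le_one _ instBEqOfDecidableEq _).1 h a

private def eCount (l : List V) (a b : V) : ℕ :=
  (l.zip l.tail).count (a, b) + (l.zip l.tail).count (b, a)

private lemma getElem?_inj' {l : List V} (h : l.Nodup) {i j : ℕ} {v : V}
    (hi : l[i]? = some v) (hj : l[j]? = some v) : i = j := by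
  have hlt : i < l.length := by
    by_contra hc
    rw [List.getElem?_eq_none (le_of_not_gt hc)] at hi
    simp at hi
  exact (List.getElem?_inj hlt h).1 (hi.trans hj.symm)

private lemma eCount_pos_iff {l : List V} {a b : V} :
    0 < eCount l a b ↔ (a, b) ∈ zipAdj l ∨ (b, a) ∈ zipAdj l := by
  unfold eCount zipAdj
  rw [add_pos_iff, List.count_pos_iff, List.count_pos_iff]

private lemma eCount_le_one {l : List V} (h : l.Nodup) (a b : V) :
    eCount l a b ≤ 1 := by
  have hnd := zipAdj_nodup h
  have hc1 := count_le_one_of_nodup hnd (a, b)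
  have hc2 := count_le_one_of_nodup hnd (b, a)
  by_cases hmem : (a, b) ∈ zipAdj l
  · obtain ⟨t, ht1, ht2⟩ := mem_zipAdj_iff.1 hmem
    have hno : (b, a) ∉ zipAdj l := by
      intro hmem2
      obtain ⟨s, hs1, hs2⟩ := mem_zipAdj_iff.1 hmem2
      have e1 : t = s + 1 := getElem?_inj' h ht1 hs2
      have e2 : t + 1 = s := getElem?_inj' h ht2 hs1
      omega
    have h0 : (zipAdj l).count (b, a) = 0 := List.count_eq_zero.2 hno
    show (zipAdj l).count (a, b) + (zipAdj l).count (b, a) ≤ 1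
    omega
  · have h0 : (zipAdj l).count (a, b) = 0 := List.count_eq_zero.2 hmem
    show (zipAdj l).count (a, b) + (zipAdj l).count (b, a) ≤ 1
    omega

private lemma eCount_pos_of_mem {l : List V} {a b : V}
    (h : (a, b) ∈ zipAdj l ∨ (b, a) ∈ zipAdj l) : 0 < eCount l a b :=
  eCount_pos_iff.2 h

end Aux2

section Seg
set_option linter.unusedSectionVars false

/-- The segment of `P` from index `i` to index `j` (inclusive). -/
private def seg (P : List V) (i j : ℕ) : List V := (P.take (j+1)).drop i

private lemma seg_infix (P : List V) (i j : ℕ) : seg P i j <:+: P :=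
  ((P.take (j+1)).drop_suffix i).isInfix.trans ((P.take_prefix (j+1)).isInfix)

private lemma seg_getElem? (P : List V) (i j t : ℕ) :
    (seg P i j)[t]? = if i + t ≤ j then P[i+t]? else none := by
  unfold seg
  rw [List.getElem?_drop, List.getElem?_take]
  by_cases h : i + t ≤ j
  · rw [if_pos (by omega), if_pos h]
  · rw [if_neg (by omega), if_neg h]

private lemma seg_length (P : List V) {i j : ℕ} (hj : j < P.length) (hij : i ≤ j) :
    (seg P i j).length = j + 1 - i := by
  unfold seg
  rw [List.length_drop, List.length_take]
  omega

private lemma seg_head? (P : List V) {i j : ℕ} (hij : i ≤ j) :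
    (seg P i j).head? = P[i]? := by
  rw [List.head?_eq_getElem?, seg_getElem?, if_pos (by omega : i + 0 ≤ j)]
  congr 1

private lemma seg_getLast? (P : List V) {i j : ℕ} (hj : j < P.length) (hij : i ≤ j) :
    (seg P i j).getLast? = P[j]? := by
  rw [List.getLast?_eq_getElem?, seg_length P hj hij, seg_getElem?,
    if_pos (by omega)]
  congr 1
  omega

private lemma seg_ne_nil (P : List V) {i j : ℕ} (hj : j < P.length) (hij : i ≤ j) :
    seg P i j ≠ [] := by
  intro h
  have := seg_length P hj hij
  rw [h] at this
  simp at this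
  omega

private lemma seg_mem (P : List V) {i j : ℕ} {v : V} (h : v ∈ seg P i j) :
    ∃ t, i ≤ t ∧ t ≤ j ∧ P[t]? = some v := by
  obtain ⟨n, hn⟩ := List.mem_iff_getElem?.1 h
  rw [seg_getElem?] at hn
  by_cases hc : i + n ≤ j
  · rw [if_pos hc] at hn
    exact ⟨i + n, by omega, hc, hn⟩
  · rw [if_neg hc] at hn
    simp at hn

private lemma zipAdj_seg [DecidableEq V] {P : List V} {i j : ℕ} {p q : V}
    (h : (p, q) ∈ zipAdj (seg P i j)) :
    ∃ t, i ≤ t ∧ t + 1 ≤ j ∧ P[t]? = some p ∧ P[t+1]? = some q := by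
  obtain ⟨n, h1, h2⟩ := mem_zipAdj_iff.1 h
  rw [seg_getElem?] at h1 h2
  by_cases hc : i + (n+1) ≤ j
  · rw [if_pos (by omega)] at h1
    rw [if_pos hc] at h2
    refine ⟨i + n, by omega, by omega, h1, ?_⟩
    rw [show i + n + 1 = i + (n+1) from by omega]
    exact h2
  · rw [if_neg hc] at h2
    simp at h2

end Seg

section Paths
variable [DecidableEq V]
set_option linter.unusedSectionVars false

/-- The edge `{a,b}` sits at position `t` of `P`. -/
private def edgeAtP (P : List V) (t : ℕ) (a b : V) : Prop :=
  (P[t]? = some a ∧ P[t+1]? = some b) ∨ (P[t]? = some b ∧ P[t+1]? = some a)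

private lemma edgeAtP_unique {P : List V} (h : P.Nodup) {t s : ℕ} {a b : V}
    (h1 : edgeAtP P t a b) (h2 : edgeAtP P s a b) : t = s := by
  rcases h1 with ⟨u1, u2⟩ | ⟨u1, u2⟩ <;> rcases h2 with ⟨v1, v2⟩ | ⟨v1, v2⟩
  · exact getElem?_inj' h u1 v1
  · have e1 : t = s + 1 := getElem?_inj' h u1 v2
    have e2 : t + 1 = s := getElem?_inj' h u2 v1
    omega
  · have e1 : t = s + 1 := getElem?_inj' h u1 v2
    have e2 : t + 1 = s := getElem?_inj' h u2 v1
    omega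
  · exact getElem?_inj' h u1 v1

private lemma edgeAtP_count {P : List V} {t : ℕ} {a b : V} (h : edgeAtP P t a b) :
    0 < eCount P a b := by
  rcases h with ⟨h1, h2⟩ | ⟨h1, h2⟩
  · exact eCount_pos_of_mem (Or.inl (mem_zipAdj_iff.2 ⟨t, h1, h2⟩))
  · exact eCount_pos_of_mem (Or.inr (mem_zipAdj_iff.2 ⟨t, h1, h2⟩))

private lemma adj_symm (G : MGraph V) {a b : V} (h : G.Adj a b) : G.Adj b a := by
  unfold MGraph.Adj at *
  rwa [Sym2.eq_swap]

private lemma chain'_rel {G : MGraph V} {l : List V} (h : l.Chain' G.Adj) {p q : V}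
    (hm : (p, q) ∈ zipAdj l) : G.Adj p q := by
  obtain ⟨t, h1, h2⟩ := mem_zipAdj_iff.1 hm
  obtain ⟨hlt, hp⟩ := List.getElem?_eq_some_iff.1 h1
  obtain ⟨hlt2, hq⟩ := List.getElem?_eq_some_iff.1 h2
  have := List.isChain_iff_getElem.1 h t (by omega)
  simpa [List.get_eq_getElem, hp, hq] using this

private lemma chain'_reverse_adj {G : MGraph V} {l : List V} (h : l.Chain' G.Adj) :
    l.reverse.Chain' G.Adj := by
  show List.IsChain _ _; rw [List.isChain_reverse]
  exact h.imp (fun a b hab => adj_symm G hab)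

/-- Inner path from index `i` to index `j` along `P`. -/
private def innerP (P : List V) (i j : ℕ) : List V :=
  if i ≤ j then seg P i j else (seg P j i).reverse

private lemma innerP_head {P : List V} {i j : ℕ} (hi : i < P.length) (hj : j < P.length) :
    (innerP P i j).head? = P[i]? := by
  unfold innerP
  by_cases h : i ≤ j
  · rw [if_pos h, seg_head? P h]
  · rw [if_neg h, List.head?_reverse, seg_getLast? P hi (by omega)]

private lemma innerP_last {P : List V} {i j : ℕ} (hi : i < P.length) (hj : j < P.length) :
    (innerP P i j).getLast? = P[j]? := by
  unfold innerP
  by_cases h : i ≤ j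
  · rw [if_pos h, seg_getLast? P hj h]
  · rw [if_neg h, List.getLast?_reverse, seg_head? P (by omega)]

private lemma innerP_nodup {P : List V} (hP : P.Nodup) (i j : ℕ) :
    (innerP P i j).Nodup := by
  unfold innerP
  by_cases h : i ≤ j
  · rw [if_pos h]; exact hP.sublist (seg_infix P i j).sublist
  · rw [if_neg h]; exact List.nodup_reverse.2 (hP.sublist (seg_infix P j i).sublist)

private lemma innerP_chain {G : MGraph V} {P : List V} (hch : P.Chain' G.Adj) (i j : ℕ) :
    (innerP P i j).Chain' G.Adj := by
  unfold innerP
  by_cases h : i ≤ j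
  · rw [if_pos h]; exact hch.infix (seg_infix P i j)
  · rw [if_neg h]; exact chain'_reverse_adj (hch.infix (seg_infix P j i))

private lemma innerP_edges {P : List V} {i j : ℕ} {a b : V}
    (h : 0 < eCount (innerP P i j) a b) :
    ∃ t, min i j ≤ t ∧ t + 1 ≤ max i j ∧ edgeAtP P t a b := by
  unfold innerP at h
  by_cases hij : i ≤ j
  · rw [if_pos hij] at h
    rcases eCount_pos_iff.1 h with hmem | hmem
    · obtain ⟨t, h1, h2, h3, h4⟩ := zipAdj_seg hmem
      exact ⟨t, by omega, by omega, Or.inl ⟨h3, h4⟩⟩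
    · obtain ⟨t, h1, h2, h3, h4⟩ := zipAdj_seg hmem
      exact ⟨t, by omega, by omega, Or.inr ⟨h3, h4⟩⟩
  · rw [if_neg hij] at h
    rcases eCount_pos_iff.1 h with hmem | hmem
    · obtain ⟨t, h1, h2, h3, h4⟩ := zipAdj_seg ((zipAdj_reverse _).1 hmem)
      exact ⟨t, by omega, by omega, Or.inr ⟨h3, h4⟩⟩
    · obtain ⟨t, h1, h2, h3, h4⟩ := zipAdj_seg ((zipAdj_reverse _).1 hmem)
      exact ⟨t, by omega, by omega, Or.inl ⟨h3, h4⟩⟩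

end Paths

section Outer
variable [DecidableEq V]
set_option linter.unusedSectionVars false

private lemma eCount_eq_edgeCount (l : List V) (a b : V) : eCount l a b = edgeCount l a b := rfl

private lemma zipAdj_infix {l₁ l₂ : List V} (h : l₁ <:+: l₂) {p q : V}
    (hm : (p, q) ∈ zipAdj l₁) : (p, q) ∈ zipAdj l₂ := by
  obtain ⟨u, w, rfl⟩ := h
  obtain ⟨t, h1, h2⟩ := mem_zipAdj_iff.1 hm
  have hlt : t + 1 < l₁.length := (List.getElem?_eq_some_iff.1 h2).1
  refine mem_zipAdj_iff.2 ⟨u.length + t, ?_, ?_⟩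
  · rw [List.append_assoc, List.getElem?_append_right (by omega),
      Nat.add_sub_cancel_left, List.getElem?_append_left (by omega)]
    exact h1
  · rw [List.append_assoc, show u.length + t + 1 = u.length + (t+1) from by omega,
      List.getElem?_append_right (by omega),
      Nat.add_sub_cancel_left, List.getElem?_append_left (by omega)]
    exact h2

end Outer

section OuterB
variable [DecidableEq V]
set_option linter.unusedSectionVars false
set_option linter.unusedVariables false

/-- Outer path: from `P[i]` back to `P[0]`, across the interior `mid` of `P_b`,
then from `P[n-1]` back to `P[j]`.  Requires `i < j`. -/
private def outerP (P mid : List V) (i j : ℕ) : List V :=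
  (seg P 0 i).reverse ++ (mid ++ (seg P j (P.length - 1)).reverse)

variable {G : MGraph V} {P pb mid : List V} {i j : ℕ} {p0 pl : V}

private lemma outerP_head (hn : 2 ≤ P.length) (hj : j < P.length) (hij : i < j) :
    (outerP P mid i j).head? = P[i]? := by
  unfold outerP
  rw [List.head?_append, List.head?_reverse, seg_getLast? P (by omega) (by omega),
    List.getElem?_eq_getElem (show i < P.length by omega)]
  rfl

private lemma outerP_last (hn : 2 ≤ P.length) (hj : j < P.length) (hij : i < j) :
    (outerP P mid i j).getLast? = P[j]? := by
  unfold outerP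
  rw [List.getLast?_append, List.getLast?_append, List.getLast?_reverse,
    seg_head? P (by omega : j ≤ P.length - 1)]
  have : P[j]? = some P[j] := List.getElem?_eq_getElem hj
  rw [this]
  rfl

private lemma outerP_nodup (hP : P.Nodup) (hmidnd : mid.Nodup)
    (hmidP : ∀ v ∈ mid, v ∉ P)
    (hn : 2 ≤ P.length) (hj : j < P.length) (hij : i < j) :
    (outerP P mid i j).Nodup := by
  unfold outerP
  have hsegA : (seg P 0 i).Nodup := hP.sublist (seg_infix P 0 i).sublist
  have hsegB : (seg P j (P.length - 1)).Nodup := hP.sublist (seg_infix P j (P.length - 1)).sublist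
  rw [List.nodup_append', List.nodup_append']
  refine ⟨List.nodup_reverse.2 hsegA, ⟨hmidnd, List.nodup_reverse.2 hsegB, ?_⟩, ?_⟩
  · intro v hv hv2
    exact hmidP v hv ((seg_infix P j (P.length - 1)).sublist.mem (List.mem_reverse.1 hv2))
  · intro v hv hv2
    have hvP : v ∈ seg P 0 i := List.mem_reverse.1 hv
    obtain ⟨t, _, ht2, ht3⟩ := seg_mem P hvP
    rcases List.mem_append.1 hv2 with hvm | hvB
    · exact hmidP v hvm ((seg_infix P 0 i).sublist.mem hvP)
    · obtain ⟨s, hs1, _, hs3⟩ := seg_mem P (List.mem_reverse.1 hvB)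
      have := getElem?_inj' hP ht3 hs3
      omega

private lemma zipAdj_pb_first (hpbeq : pb = p0 :: (mid ++ [pl])) (h : mid ≠ []) :
    (p0, mid.head h) ∈ zipAdj pb := by
  cases mid with
  | nil => exact absurd rfl h
  | cons m ms =>
    rw [hpbeq]
    exact List.mem_cons.2 (Or.inl rfl)

private lemma zipAdj_pb_first' (hpbeq : pb = p0 :: (mid ++ [pl])) (h : mid = []) :
    (p0, pl) ∈ zipAdj pb := by
  subst h
  rw [hpbeq]
  exact List.mem_cons.2 (Or.inl rfl)

private lemma zipAdj_pb_last (hpbeq : pb = p0 :: (mid ++ [pl])) (h : mid ≠ []) :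
    (mid.getLast h, pl) ∈ zipAdj pb := by
  have hinf : mid ++ [pl] <:+: pb := ⟨[p0], [], by simp [hpbeq]⟩
  refine zipAdj_infix hinf ?_
  rw [zipAdj_append h (by simp)]
  exact List.mem_append.2 (Or.inr (List.mem_cons.2 (Or.inl rfl)))

private lemma zipAdj_pb_mid (hpbeq : pb = p0 :: (mid ++ [pl])) {p q : V}
    (h : (p, q) ∈ zipAdj mid) : (p, q) ∈ zipAdj pb :=
  zipAdj_infix ⟨[p0], [pl], by simp [hpbeq]⟩ h

private lemma outerP_chain (hP : P.Nodup) (hchP : P.Chain' G.Adj) (hchpb : pb.Chain' G.Adj)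
    (hpbeq : pb = p0 :: (mid ++ [pl]))
    (hp0 : P[0]? = some p0) (hpl : P[P.length - 1]? = some pl)
    (hn : 2 ≤ P.length) (hj : j < P.length) (hij : i < j) :
    (outerP P mid i j).Chain' G.Adj := by
  unfold outerP
  have hchmid : mid.Chain' G.Adj := hchpb.infix ⟨[p0], [pl], by simp [hpbeq]⟩
  have hBhead : ((seg P j (P.length - 1)).reverse).head? = some pl := by
    rw [List.head?_reverse, seg_getLast? P (by omega) (by omega), hpl]
  show List.IsChain _ _; rw [List.isChain_append]
  refine ⟨chain'_reverse_adj (hchP.infix (seg_infix P 0 i)), ?_, ?_⟩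
  · show List.IsChain _ _; rw [List.isChain_append]
    refine ⟨hchmid, chain'_reverse_adj (hchP.infix (seg_infix P j (P.length - 1))), ?_⟩
    intro x hx y hy
    have hmne : mid ≠ [] := by rintro rfl; simp at hx
    rw [List.getLast?_eq_getLast hmne] at hx
    rw [hBhead] at hy
    simp only [Option.mem_def, Option.some.injEq] at hx hy
    subst hx; subst hy
    exact chain'_rel hchpb (zipAdj_pb_last hpbeq hmne)
  · intro x hx y hy
    rw [List.getLast?_reverse, seg_head? P (by omega : (0:ℕ) ≤ i), hp0] at hx
    simp only [Option.mem_def, Option.some.injEq] at hx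
    subst hx
    rw [List.head?_append] at hy
    cases hmid : mid with
    | nil =>
      rw [hmid] at hy
      simp only [List.head?_nil, Option.none_or] at hy
      rw [hBhead] at hy
      simp only [Option.mem_def, Option.some.injEq] at hy
      subst hy
      exact chain'_rel hchpb (zipAdj_pb_first' hpbeq hmid)
    | cons m ms =>
      subst hmid
      simp only [List.head?_append, List.head?_cons] at hy
      rw [show (some m).or ((seg P j (P.length - 1)).reverse.head?) = some m from rfl] at hy
      simp only [Option.mem_def, Option.some.injEq] at hy
      subst hy
      exact chain'_rel hchpb (zipAdj_pb_first hpbeq (by simp))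

end OuterB

section OuterE
variable [DecidableEq V]
set_option linter.unusedSectionVars false
set_option linter.unusedVariables false
variable {G : MGraph V} {P pb mid : List V} {i j : ℕ} {p0 pl : V}

private lemma outerP_edges_mem (hP : P.Nodup)
    (hpbeq : pb = p0 :: (mid ++ [pl]))
    (hp0 : P[0]? = some p0) (hpl : P[P.length - 1]? = some pl)
    (hn : 2 ≤ P.length) (hj : j < P.length) (hij : i < j) {p q : V}
    (h : (p, q) ∈ zipAdj (outerP P mid i j)) :
    (∃ t, (t + 1 ≤ i ∨ j ≤ t) ∧ ((P[t]? = some p ∧ P[t+1]? = some q) ∨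
      (P[t]? = some q ∧ P[t+1]? = some p))) ∨ (p, q) ∈ zipAdj pb := by
  have hAne : (seg P 0 i).reverse ≠ [] := by
    simp [seg_ne_nil P (by omega : i < P.length) (by omega : (0:ℕ) ≤ i)]
  have hBne : (seg P j (P.length - 1)).reverse ≠ [] := by
    simp [seg_ne_nil P (by omega : P.length - 1 < P.length) (by omega : j ≤ P.length - 1)]
  have hmBne : mid ++ (seg P j (P.length - 1)).reverse ≠ [] := by
    simp [hBne]
  unfold outerP at h
  rw [zipAdj_append hAne hmBne] at h
  rcases List.mem_append.1 h with h | h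
  · -- inside A reversed
    obtain ⟨t, h1, h2, h3, h4⟩ := zipAdj_seg ((zipAdj_reverse _).1 h)
    exact Or.inl ⟨t, Or.inl (by omega), Or.inr ⟨h3, h4⟩⟩
  rcases List.mem_cons.1 h with h | h
  · -- the boundary pair (p0, head of mid ++ B)
    right
    rw [Prod.mk.injEq] at h
    obtain ⟨hp, hq⟩ := h
    have hA : ((seg P 0 i).reverse).getLast hAne = p0 := by
      have := List.getLast?_eq_getLast hAne
      rw [List.getLast?_reverse, seg_head? P (by omega : (0:ℕ) ≤ i), hp0] at this
      exact (Option.some.inj this.symm)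
    rw [hA] at hp
    subst hp
    cases hm : mid with
    | nil =>
      have hh? : (mid ++ (seg P j (P.length - 1)).reverse).head? = some pl := by
        rw [hm, List.nil_append, List.head?_reverse, seg_getLast? P (by omega) (by omega), hpl]
      have hhd : (mid ++ (seg P j (P.length - 1)).reverse).head hmBne = pl :=
        Option.some.inj ((List.head?_eq_head hmBne).symm.trans hh?)
      rw [hhd] at hq
      subst hq
      exact zipAdj_pb_first' hpbeq hm
    | cons m ms =>
      have hmne : mid ≠ [] := by simp [hm]
      have hhd : (mid ++ (seg P j (P.length - 1)).reverse).head hmBne = mid.head hmne := by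
        have h1 := List.head?_eq_head hmBne
        have h2 := List.head?_eq_head hmne
        rw [List.head?_append, h2] at h1
        rw [show (some (mid.head hmne)).or ((seg P j (P.length - 1)).reverse.head?)
          = some (mid.head hmne) from rfl] at h1
        exact (Option.some.inj h1).symm
      rw [hhd] at hq
      subst hq
      exact zipAdj_pb_first hpbeq hmne
  · -- inside mid ++ B
    cases hm : mid with
    | nil =>
      rw [hm, List.nil_append] at h
      obtain ⟨t, h1, h2, h3, h4⟩ := zipAdj_seg ((zipAdj_reverse _).1 h)
      exact Or.inl ⟨t, Or.inr (by omega), Or.inr ⟨h3, h4⟩⟩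
    | cons m ms =>
      have hmne : mid ≠ [] := by simp [hm]
      rw [zipAdj_append hmne hBne] at h
      rcases List.mem_append.1 h with h | h
      · exact Or.inr (zipAdj_pb_mid hpbeq h)
      rcases List.mem_cons.1 h with h | h
      · right
        rw [Prod.mk.injEq] at h
        obtain ⟨hp, hq⟩ := h
        have hB : ((seg P j (P.length - 1)).reverse).head hBne = pl := by
          have := List.head?_eq_head hBne
          rw [List.head?_reverse, seg_getLast? P (by omega) (by omega), hpl] at this
          exact (Option.some.inj this).symm
        rw [hB] at hq
        subst hp; subst hq
        exact zipAdj_pb_last hpbeq hmne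
      · obtain ⟨t, h1, h2, h3, h4⟩ := zipAdj_seg ((zipAdj_reverse _).1 h)
        exact Or.inl ⟨t, Or.inr (by omega), Or.inr ⟨h3, h4⟩⟩

private lemma outerP_edges (hP : P.Nodup)
    (hpbeq : pb = p0 :: (mid ++ [pl]))
    (hp0 : P[0]? = some p0) (hpl : P[P.length - 1]? = some pl)
    (hn : 2 ≤ P.length) (hj : j < P.length) (hij : i < j) {a b : V}
    (h : 0 < eCount (outerP P mid i j) a b) :
    (∃ t, (t + 1 ≤ i ∨ j ≤ t) ∧ edgeAtP P t a b) ∨ 0 < eCount pb a b := by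
  rcases eCount_pos_iff.1 h with hmem | hmem
  · rcases outerP_edges_mem hP hpbeq hp0 hpl hn hj hij hmem with ⟨t, h1, h2⟩ | h2
    · exact Or.inl ⟨t, h1, h2⟩
    · exact Or.inr (eCount_pos_of_mem (Or.inl h2))
  · rcases outerP_edges_mem hP hpbeq hp0 hpl hn hj hij hmem with ⟨t, h1, h2⟩ | h2
    · exact Or.inl ⟨t, h1, h2.symm⟩
    · exact Or.inr (eCount_pos_of_mem (Or.inr h2))

end OuterE

section Final
variable [DecidableEq V]
set_option linter.unusedSectionVars false
set_option linter.unusedVariables false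

private lemma eCount_singleton (v a b : V) : eCount [v] a b = 0 := rfl

private lemma final_bound (G : MGraph V) (P pb : List V) (hP : P.Nodup)
    (hm : ∀ a b : V, a ≠ b → G.m s(a, b) = 2 * edgeCount P a b + edgeCount pb a b)
    (L1 L2 L3 : List V) (A1 B1 A2 B2 A3 B3 : ℕ)
    (h1 : L1.Nodup) (h2 : L2.Nodup) (h3 : L3.Nodup)
    (hc1 : ∀ a b : V, 0 < eCount L1 a b → ∃ t, A1 ≤ t ∧ t + 1 ≤ B1 ∧ edgeAtP P t a b)
    (hc2 : ∀ a b : V, 0 < eCount L2 a b → ∃ t, A2 ≤ t ∧ t + 1 ≤ B2 ∧ edgeAtP P t a b)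
    (hc3 : ∀ a b : V, 0 < eCount L3 a b →
      (∃ t, (t + 1 ≤ A3 ∨ B3 ≤ t) ∧ edgeAtP P t a b) ∨ 0 < eCount pb a b)
    (hcond : (A3 ≤ A1 ∨ A3 ≤ A2) ∧ (B1 ≤ B3 ∨ B2 ≤ B3)) :
    ∀ a b : V, a ≠ b →
      edgeCount L1 a b + edgeCount L2 a b + edgeCount L3 a b ≤ G.m s(a, b) := by
  intro a b hab
  rw [hm a b hab]
  simp only [← eCount_eq_edgeCount]
  have b1 := eCount_le_one h1 a b
  have b2 := eCount_le_one h2 a b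
  have b3 := eCount_le_one h3 a b
  have H1 : eCount L1 a b = 0 ∨
      (0 < eCount P a b ∧ ∃ t, A1 ≤ t ∧ t + 1 ≤ B1 ∧ edgeAtP P t a b) := by
    rcases Nat.eq_zero_or_pos (eCount L1 a b) with h | h
    · exact Or.inl h
    · obtain ⟨t, ht⟩ := hc1 a b h
      exact Or.inr ⟨edgeAtP_count ht.2.2, t, ht⟩
  have H2 : eCount L2 a b = 0 ∨
      (0 < eCount P a b ∧ ∃ t, A2 ≤ t ∧ t + 1 ≤ B2 ∧ edgeAtP P t a b) := by
    rcases Nat.eq_zero_or_pos (eCount L2 a b) with h | h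
    · exact Or.inl h
    · obtain ⟨t, ht⟩ := hc2 a b h
      exact Or.inr ⟨edgeAtP_count ht.2.2, t, ht⟩
  have H3 : eCount L3 a b = 0 ∨ 0 < eCount pb a b ∨
      (0 < eCount P a b ∧ ∃ t, (t + 1 ≤ A3 ∨ B3 ≤ t) ∧ edgeAtP P t a b) := by
    rcases Nat.eq_zero_or_pos (eCount L3 a b) with h | h
    · exact Or.inl h
    · rcases hc3 a b h with ⟨t, ht⟩ | hpb
      · exact Or.inr (Or.inr ⟨edgeAtP_count ht.2, t, ht⟩)
      · exact Or.inr (Or.inl hpb)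
  rcases H1 with e1 | ⟨E1, t1, r1a, r1b, he1⟩ <;>
    rcases H2 with e2 | ⟨E2, t2, r2a, r2b, he2⟩ <;>
      rcases H3 with e3 | hF | ⟨E3, t3, r3, he3⟩ <;>
        try omega
  -- remaining: all three use `pstar` edges
  have u13 : t1 = t3 := edgeAtP_unique hP he1 he3
  have u23 : t2 = t3 := edgeAtP_unique hP he2 he3
  omega

end Final

section Core
variable [DecidableEq V]
set_option linter.unusedSectionVars false
set_option linter.unusedVariables false

private lemma chain_of_ec (G : MGraph V) {l : List V} (hnd : l.Nodup)
    (hadj : ∀ a b : V, a ≠ b → 0 < eCount l a b → G.Adj a b) : l.Chain' G.Adj := by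
  show List.IsChain _ _; rw [List.isChain_iff_getElem]
  intro i hi
  have ha : l[i]? = some (l.get ⟨i, by omega⟩) := by
    rw [List.get_eq_getElem]
    exact List.getElem?_eq_getElem (by omega)
  have hb : l[i+1]? = some (l.get ⟨i+1, by omega⟩) := by
    rw [List.get_eq_getElem]
    exact List.getElem?_eq_getElem (by omega)
  have hne : l.get ⟨i, by omega⟩ ≠ l.get ⟨i+1, by omega⟩ := by
    intro he
    have := getElem?_inj' hnd ha (he ▸ hb)
    omega
  exact hadj _ _ hne (eCount_pos_of_mem (Or.inl (mem_zipAdj_iff.2 ⟨i, ha, hb⟩)))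

/-- Core construction: pairs `x`, `y` routed inside along `P`; pair `z` rerouted
through `P_b`, under the median condition on the indices. -/
private lemma core (G : MGraph V) (P pb : List V)
    (hps : P.Nodup) (hlen : 2 ≤ P.length) (hpb : pb.Nodup)
    (hhead : pb.head? = P.head?) (hlast : pb.getLast? = P.getLast?)
    (hintdisj : ∀ w ∈ pb, some w ≠ pb.head? → some w ≠ pb.getLast? → w ∉ P)
    (hm : ∀ a b : V, a ≠ b → G.m s(a, b) = 2 * edgeCount P a b + edgeCount pb a b)
    (i1 i2 j1 j2 k1 k2 : ℕ) (x1 x2 y1 y2 z1 z2 : V)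
    (hi1 : P[i1]? = some x1) (hi2 : P[i2]? = some x2)
    (hj1 : P[j1]? = some y1) (hj2 : P[j2]? = some y2)
    (hk1 : P[k1]? = some z1) (hk2 : P[k2]? = some z2)
    (hcond : (min k1 k2 ≤ min i1 i2 ∨ min k1 k2 ≤ min j1 j2) ∧
      (max i1 i2 ≤ max k1 k2 ∨ max j1 j2 ≤ max k1 k2)) :
    ∃ L1 L2 L3 : List V,
      (L1.head? = some x1 ∧ L1.getLast? = some x2 ∧ L1.Nodup ∧ L1.Chain' G.Adj) ∧
      (L2.head? = some y1 ∧ L2.getLast? = some y2 ∧ L2.Nodup ∧ L2.Chain' G.Adj) ∧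
      (L3.head? = some z1 ∧ L3.getLast? = some z2 ∧ L3.Nodup ∧ L3.Chain' G.Adj) ∧
      ∀ a b : V, a ≠ b →
        edgeCount L1 a b + edgeCount L2 a b + edgeCount L3 a b ≤ G.m s(a, b) := by
  -- index bounds
  have hi1l : i1 < P.length := (List.getElem?_eq_some_iff.1 hi1).1
  have hi2l : i2 < P.length := (List.getElem?_eq_some_iff.1 hi2).1
  have hj1l : j1 < P.length := (List.getElem?_eq_some_iff.1 hj1).1
  have hj2l : j2 < P.length := (List.getElem?_eq_some_iff.1 hj2).1
  have hk1l : k1 < P.length := (List.getElem?_eq_some_iff.1 hk1).1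
  have hk2l : k2 < P.length := (List.getElem?_eq_some_iff.1 hk2).1
  -- chains
  have hadj : ∀ a b : V, a ≠ b → (0 < eCount P a b ∨ 0 < eCount pb a b) → G.Adj a b := by
    intro a b hab h
    show 0 < G.m s(a, b)
    rw [hm a b hab]
    simp only [← eCount_eq_edgeCount]
    omega
  have hchP : P.Chain' G.Adj := chain_of_ec G hps (fun a b hab h => hadj a b hab (Or.inl h))
  have hchpb : pb.Chain' G.Adj := chain_of_ec G hpb (fun a b hab h => hadj a b hab (Or.inr h))
  -- endpoints of `P`
  have hPne : P ≠ [] := by intro h; rw [h] at hlen; simp at hlen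
  have hp0 : P[0]? = P.head? := by
    rw [List.head?_eq_getElem?]
  have hpl : P[P.length - 1]? = P.getLast? := by
    rw [List.getLast?_eq_getElem?]
  -- decompose pb
  have hpbne : pb ≠ [] := by
    intro h
    rw [h] at hhead
    rw [← hp0] at hhead
    rw [List.getElem?_eq_getElem (by omega)] at hhead
    simp at hhead
  obtain ⟨p0, tl, rfl⟩ := List.exists_cons_of_ne_nil hpbne
  have hp0v : P[0]? = some p0 := by
    rw [hp0, ← hhead]; rfl
  have htlne : tl ≠ [] := by
    rintro rfl
    have h1 : P[P.length - 1]? = some p0 := by rw [hpl, ← hlast]; rfl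
    have := getElem?_inj' hps hp0v h1
    omega
  obtain ⟨mid, pl, rfl⟩ : ∃ mid pl, tl = mid ++ [pl] :=
    ⟨tl.dropLast, tl.getLast htlne, (List.dropLast_append_getLast htlne).symm⟩
  have hplv : P[P.length - 1]? = some pl := by
    rw [hpl, ← hlast]
    simp [List.getLast?_cons, List.getLast?_concat]
  have hpbeq : p0 :: (mid ++ [pl]) = p0 :: (mid ++ [pl]) := rfl
  -- mid is disjoint from P
  have hmidnd : mid.Nodup := by
    rw [List.nodup_cons, List.nodup_append] at hpb
    exact hpb.2.1
  have hmidP : ∀ v ∈ mid, v ∉ P := by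
    intro v hv
    refine hintdisj v (by simp [hv]) ?_ ?_
    · rw [List.head?_cons]
      intro h
      have : v = p0 := Option.some.inj h
      subst this
      rw [List.nodup_cons] at hpb
      exact hpb.1 (by simp [hv])
    · rw [List.getLast?_cons, List.getLast?_concat]
      intro h
      have : v = pl := by simpa using h
      subst this
      rw [List.nodup_cons, List.nodup_append'] at hpb
      exact hpb.2.2.2 hv (by simp)
  -- the two inner paths
  have S1 : (innerP P i1 i2).head? = some x1 ∧ (innerP P i1 i2).getLast? = some x2 ∧
      (innerP P i1 i2).Nodup ∧ (innerP P i1 i2).Chain' G.Adj := by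
    refine ⟨?_, ?_, innerP_nodup hps i1 i2, innerP_chain hchP i1 i2⟩
    · rw [innerP_head hi1l hi2l, hi1]
    · rw [innerP_last hi1l hi2l, hi2]
  have S2 : (innerP P j1 j2).head? = some y1 ∧ (innerP P j1 j2).getLast? = some y2 ∧
      (innerP P j1 j2).Nodup ∧ (innerP P j1 j2).Chain' G.Adj := by
    refine ⟨?_, ?_, innerP_nodup hps j1 j2, innerP_chain hchP j1 j2⟩
    · rw [innerP_head hj1l hj2l, hj1]
    · rw [innerP_last hj1l hj2l, hj2]
  have hc1 : ∀ a b : V, 0 < eCount (innerP P i1 i2) a b →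
      ∃ t, min i1 i2 ≤ t ∧ t + 1 ≤ max i1 i2 ∧ edgeAtP P t a b :=
    fun a b h => innerP_edges h
  have hc2 : ∀ a b : V, 0 < eCount (innerP P j1 j2) a b →
      ∃ t, min j1 j2 ≤ t ∧ t + 1 ≤ max j1 j2 ∧ edgeAtP P t a b :=
    fun a b h => innerP_edges h
  -- the rerouted path
  have KEY : ∃ L3 : List V,
      (L3.head? = some z1 ∧ L3.getLast? = some z2 ∧ L3.Nodup ∧ L3.Chain' G.Adj) ∧
      ∀ a b : V, 0 < eCount L3 a b →
        (∃ t, (t + 1 ≤ min k1 k2 ∨ max k1 k2 ≤ t) ∧ edgeAtP P t a b) ∨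
          0 < eCount (p0 :: (mid ++ [pl])) a b := by
    rcases lt_trichotomy k1 k2 with hk | hk | hk
    · refine ⟨outerP P mid k1 k2, ⟨?_, ?_, outerP_nodup hps hmidnd hmidP hlen hk2l hk,
        outerP_chain hps hchP hchpb rfl hp0v hplv hlen hk2l hk⟩, ?_⟩
      · rw [outerP_head hlen hk2l hk, hk1]
      · rw [outerP_last hlen hk2l hk, hk2]
      · intro a b h
        rcases outerP_edges hps rfl hp0v hplv hlen hk2l hk h with ⟨t, hr, he⟩ | hF
        · exact Or.inl ⟨t, by omega, he⟩
        · exact Or.inr hF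
    · have hzz : z1 = z2 := by
        rw [hk] at hk1
        exact Option.some.inj (hk1.symm.trans hk2)
      refine ⟨[z1], ⟨rfl, by rw [hzz]; rfl, by simp, List.isChain_singleton _⟩, ?_⟩
      intro a b h
      rw [eCount_singleton] at h
      omega
    · refine ⟨(outerP P mid k2 k1).reverse, ⟨?_, ?_,
        List.nodup_reverse.2 (outerP_nodup hps hmidnd hmidP hlen hk1l hk),
        chain'_reverse_adj (outerP_chain hps hchP hchpb rfl hp0v hplv hlen hk1l hk)⟩, ?_⟩
      · rw [List.head?_reverse, outerP_last hlen hk1l hk, hk1]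
      · rw [List.getLast?_reverse, outerP_head hlen hk1l hk, hk2]
      · intro a b h
        have h' : 0 < eCount (outerP P mid k2 k1) a b := by
          rcases eCount_pos_iff.1 h with hmem | hmem
          · exact eCount_pos_of_mem (Or.inr ((zipAdj_reverse _).1 hmem))
          · exact eCount_pos_of_mem (Or.inl ((zipAdj_reverse _).1 hmem))
        rcases outerP_edges hps rfl hp0v hplv hlen hk1l hk h' with ⟨t, hr, he⟩ | hF
        · exact Or.inl ⟨t, by omega, he⟩
        · exact Or.inr hF
  obtain ⟨L3, hS3, hc3⟩ := KEY
  exact ⟨innerP P i1 i2, innerP P j1 j2, L3, S1, S2, hS3,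
    final_bound G P (p0 :: (mid ++ [pl])) hps hm _ _ _
      (min i1 i2) (max i1 i2) (min j1 j2) (max j1 j2) (min k1 k2) (max k1 k2)
      S1.2.2.1 S2.2.2.1 hS3.2.2.1 hc1 hc2 hc3 hcond⟩

end Core

/-- Let `G` consist of a path `P*` with every edge doubled plus an
extra path `P_b` joining the endpoints of `P*` and internally disjoint from it.
Then for any three pairs of marked vertices on `P*`, `G` contains three pairwise
edge-disjoint paths joining the pairs respectively. -/
theorem stmt_19 [DecidableEq V] (G : MGraph V) (pstar pb : List V)
    (hps : pstar.Nodup) (hlen : 2 ≤ pstar.length) (hpb : pb.Nodup)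
    (hhead : pb.head? = pstar.head?) (hlast : pb.getLast? = pstar.getLast?)
    (hintdisj : ∀ w ∈ pb, some w ≠ pb.head? → some w ≠ pb.getLast? → w ∉ pstar)
    (hm : ∀ a b : V, a ≠ b → G.m s(a, b) = 2 * edgeCount pstar a b + edgeCount pb a b)
    (x1 x2 y1 y2 z1 z2 : V)
    (hx1 : x1 ∈ pstar) (hx2 : x2 ∈ pstar) (hy1 : y1 ∈ pstar)
    (hy2 : y2 ∈ pstar) (hz1 : z1 ∈ pstar) (hz2 : z2 ∈ pstar) :
    ∃ L1 L2 L3 : List V,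
      (L1.head? = some x1 ∧ L1.getLast? = some x2 ∧ L1.Nodup ∧ L1.Chain' G.Adj) ∧
      (L2.head? = some y1 ∧ L2.getLast? = some y2 ∧ L2.Nodup ∧ L2.Chain' G.Adj) ∧
      (L3.head? = some z1 ∧ L3.getLast? = some z2 ∧ L3.Nodup ∧ L3.Chain' G.Adj) ∧
      ∀ a b : V, a ≠ b →
        edgeCount L1 a b + edgeCount L2 a b + edgeCount L3 a b ≤ G.m s(a, b) := by

  have hgi : ∀ v ∈ pstar, pstar[pstar.idxOf v]? = some v := fun v hv => by
    rw [List.getElem?_eq_getElem (List.idxOf_lt_length_iff.2 hv)]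
    exact congrArg some (List.getElem_idxOf _)
  set a1 := pstar.idxOf x1 with ha1
  set a2 := pstar.idxOf x2 with ha2
  set b1 := pstar.idxOf y1 with hb1
  set b2 := pstar.idxOf y2 with hb2
  set c1 := pstar.idxOf z1 with hc1
  set c2 := pstar.idxOf z2 with hc2
  have pick :
      ((min c1 c2 ≤ min a1 a2 ∨ min c1 c2 ≤ min b1 b2) ∧
        (max a1 a2 ≤ max c1 c2 ∨ max b1 b2 ≤ max c1 c2)) ∨
      ((min b1 b2 ≤ min a1 a2 ∨ min b1 b2 ≤ min c1 c2) ∧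
        (max a1 a2 ≤ max b1 b2 ∨ max c1 c2 ≤ max b1 b2)) ∨
      ((min a1 a2 ≤ min b1 b2 ∨ min a1 a2 ≤ min c1 c2) ∧
        (max b1 b2 ≤ max a1 a2 ∨ max c1 c2 ≤ max a1 a2)) := by
    omega
  rcases pick with hp | hp | hp
  · exact core G pstar pb hps hlen hpb hhead hlast hintdisj hm a1 a2 b1 b2 c1 c2
      x1 x2 y1 y2 z1 z2 (hgi x1 hx1) (hgi x2 hx2) (hgi y1 hy1) (hgi y2 hy2)
      (hgi z1 hz1) (hgi z2 hz2) hp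
  · obtain ⟨L1, L2, L3, s1, s2, s3, hle⟩ :=
      core G pstar pb hps hlen hpb hhead hlast hintdisj hm a1 a2 c1 c2 b1 b2
        x1 x2 z1 z2 y1 y2 (hgi x1 hx1) (hgi x2 hx2) (hgi z1 hz1) (hgi z2 hz2)
        (hgi y1 hy1) (hgi y2 hy2) hp
    exact ⟨L1, L3, L2, s1, s3, s2, fun a b hab => by have := hle a b hab; omega⟩
  · obtain ⟨L1, L2, L3, s1, s2, s3, hle⟩ :=
      core G pstar pb hps hlen hpb hhead hlast hintdisj hm b1 b2 c1 c2 a1 a2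
        y1 y2 z1 z2 x1 x2 (hgi y1 hy1) (hgi y2 hy2) (hgi z1 hz1) (hgi z2 hz2)
        (hgi x1 hx1) (hgi x2 hx2) hp
    exact ⟨L3, L1, L2, s3, s1, s2, fun a b hab => by have := hle a b hab; omega⟩
end
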